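/- arXiv:1502.01005 — 3 statements merged into one kernel-verified Lean document; each statement's English description precedes it below -/
import Mathlib

section
/- Let ℜ ⊆ F(𝒜) and let r ∈ F(𝒜) be induced from ℜ, i.e., there exist r_1, …, r_m ∈ ℜ and a_1, …, a_m ∈ K such that r = Σ_{i=1}^m a_i r_i and |supp(r_i) ∩ (∪_{j=1}^{i-1} supp(r_j))| ≤ 1 for i = 2, …, m. Then ι(r) ∈ J(ℜ). -/
open MvPolynomial

noncomputable section

variable {K : Type*} [Field K] {n : ℕ}

open Classical in
/-- The support `supp(a) = {i : aᵢ ≠ 0}` of the linear form `∑ᵢ aᵢ xᵢ ∈ S₁`,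
where linear forms of `S = K[x₁,…,xₙ]` are identified with their coefficient
vectors `a : Fin n → K`. -/
def lsupp (a : Fin n → K) : Finset (Fin n) :=
  Finset.univ.filter (fun i => a i ≠ 0)

/-- `ι(r) = ∑_{i ∈ supp r} aᵢ · x_{supp(r) ∖ {i}}` for the linear form `r = ∑ᵢ aᵢ xᵢ`. -/
def iotaL (a : Fin n → K) : MvPolynomial (Fin n) K :=
  ∑ i ∈ lsupp a, C (a i) * ∏ j ∈ (lsupp a).erase i, X j

/-- `x_[n] = x₁⋯xₙ`. -/
def xAll (n : ℕ) (K : Type*) [Field K] : MvPolynomial (Fin n) K := ∏ i, X i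

/-- `a : Fin n → K` (identified with the linear form `∑ᵢ aᵢ xᵢ ∈ S₁`) is a relation of the
central arrangement whose hyperplanes are the kernels of the linear forms `α i`, i.e. it lies
in the kernel of the map `S₁ → V*`, `xᵢ ↦ αᵢ`. -/
def IsRel {V : Type*} [AddCommGroup V] [Module K V]
    (α : Fin n → Module.Dual K V) (a : Fin n → K) : Prop :=
  ∑ i, a i • α i = 0

/-- `J(ℜ) = (ι(r) : r ∈ ℜ)`. -/
def Jid (R : Set (Fin n → K)) : Ideal (MvPolynomial (Fin n) K) :=
  Ideal.span (iotaL '' R)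

/-- `I(ℜ) = (ι(r) : r ∈ K·ℜ)`. -/
def Iid (R : Set (Fin n → K)) : Ideal (MvPolynomial (Fin n) K) :=
  Ideal.span (iotaL '' (Submodule.span K R : Set (Fin n → K)))

/-- The Orlik–Terao ideal `I(𝒜) = (ι(r) : r ∈ F(𝒜))`. -/
def OTid {V : Type*} [AddCommGroup V] [Module K V]
    (α : Fin n → Module.Dual K V) : Ideal (MvPolynomial (Fin n) K) :=
  Ideal.span (iotaL '' {a | IsRel α a})

/-- The codimension (height) of an ideal `I`: the infimum of the heights, in the prime
spectrum, of the prime ideals containing `I`. -/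
def codim {R : Type*} [CommRing R] (I : Ideal R) : ℕ∞ :=
  ⨅ p ∈ {p : PrimeSpectrum R | I ≤ p.asIdeal}, Order.height p

open Finset in
lemma mem_lsupp {a : Fin n → K} {i : Fin n} : i ∈ lsupp a ↔ a i ≠ 0 := by
  simp [lsupp]

lemma lsupp_smul_subset (c : K) (u : Fin n → K) : lsupp (c • u) ⊆ lsupp u := by
  intro i hi
  rw [mem_lsupp] at hi ⊢
  intro h
  exact hi (by simp [h])

lemma lsupp_zero : lsupp (0 : Fin n → K) = ∅ := by
  ext i; simp [mem_lsupp]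

lemma iotaL_zero : iotaL (0 : Fin n → K) = 0 := by
  simp [iotaL, lsupp_zero]

lemma iotaL_smul (c : K) (u : Fin n → K) : iotaL (c • u) = C c * iotaL u := by
  rcases eq_or_ne c 0 with rfl | hc
  · simp [zero_smul, iotaL_zero]
  · have h : lsupp (c • u) = lsupp u := by
      ext i; simp [mem_lsupp, hc]
    rw [iotaL, iotaL, h, Finset.mul_sum]
    refine Finset.sum_congr rfl fun i _ => ?_
    have : (c • u) i = c * u i := rfl
    rw [this, C_mul, mul_assoc]

lemma lsupp_sum_subset {m : Type*} (S : Finset m) (f : m → (Fin n → K)) :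
    lsupp (∑ i ∈ S, f i) ⊆ S.biUnion (fun i => lsupp (f i)) := by
  intro i hi
  rw [mem_lsupp] at hi
  by_contra h
  simp only [Finset.mem_biUnion, mem_lsupp, not_exists, not_and, not_not] at h
  exact hi (by rw [Finset.sum_apply]; exact Finset.sum_eq_zero h)

/-- extended iota over a larger set -/
lemma iota_ext (u : Fin n → K) (U : Finset (Fin n)) (hU : lsupp u ⊆ U) :
    ∑ i ∈ U, C (u i) * ∏ j ∈ U.erase i, X j
      = (∏ j ∈ U \ lsupp u, X j) * iotaL u := by
  rw [iotaL, Finset.mul_sum]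
  rw [← Finset.sum_subset hU (fun i _ hi => by
    rw [mem_lsupp, not_not] at hi
    simp [hi])]
  refine Finset.sum_congr rfl fun i hi => ?_
  have hsplit : U.erase i = (U \ lsupp u) ∪ (lsupp u).erase i := by
    ext j
    simp only [Finset.mem_erase, Finset.mem_union, Finset.mem_sdiff]
    constructor
    · rintro ⟨hj, hjU⟩
      by_cases h : j ∈ lsupp u
      · exact Or.inr ⟨hj, h⟩
      · exact Or.inl ⟨hjU, h⟩
    · rintro (⟨hjU, hj⟩ | ⟨hj, hjs⟩)
      · exact ⟨fun h => hj (h ▸ hi), hjU⟩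
      · exact ⟨hj, hU hjs⟩
  have hdisj : Disjoint (U \ lsupp u) ((lsupp u).erase i) := by
    refine Finset.disjoint_left.mpr fun j hj hj' => ?_
    exact (Finset.mem_sdiff.mp hj).2 (Finset.mem_of_mem_erase hj')
  rw [hsplit, Finset.prod_union hdisj]
  ring

lemma iotaL_add_of_no_cancel (s t : Fin n → K)
    (h : ∀ i ∈ lsupp s ∩ lsupp t, s i + t i ≠ 0) :
    iotaL (s + t) = (∏ j ∈ lsupp t \ lsupp s, X j) * iotaL s
      + (∏ j ∈ lsupp s \ lsupp t, X j) * iotaL t := by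
  have hU : lsupp (s + t) = lsupp s ∪ lsupp t := by
    apply Finset.Subset.antisymm
    · intro i hi
      rw [mem_lsupp] at hi
      simp only [Finset.mem_union, mem_lsupp]
      by_contra hh
      push_neg at hh
      exact hi (by simp [hh.1, hh.2])
    · intro i hi
      rw [mem_lsupp]
      by_cases hs : i ∈ lsupp s
      · by_cases ht : i ∈ lsupp t
        · exact h i (Finset.mem_inter.mpr ⟨hs, ht⟩)
        · rw [mem_lsupp, not_not] at ht
          rw [mem_lsupp] at hs
          simpa [ht] using hs
      · have ht : i ∈ lsupp t := by
          rcases Finset.mem_union.mp hi with h' | h'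
          · exact absurd h' hs
          · exact h'
        rw [mem_lsupp, not_not] at hs
        rw [mem_lsupp] at ht
        simpa [hs] using ht
  have key : iotaL (s + t)
      = ∑ i ∈ lsupp s ∪ lsupp t, (C (s i) + C (t i)) * ∏ j ∈ (lsupp s ∪ lsupp t).erase i, X j := by
    rw [iotaL, hU]
    refine Finset.sum_congr rfl fun i _ => ?_
    congr 1
    rw [← map_add]
    rfl
  rw [key]
  have : ∀ i ∈ lsupp s ∪ lsupp t,
      (C (s i) + C (t i)) * ∏ j ∈ (lsupp s ∪ lsupp t).erase i, X j
        = C (s i) * ∏ j ∈ (lsupp s ∪ lsupp t).erase i, X j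
          + C (t i) * ∏ j ∈ (lsupp s ∪ lsupp t).erase i, X j := fun i _ => by ring
  rw [Finset.sum_congr rfl this, Finset.sum_add_distrib,
    iota_ext s _ Finset.subset_union_left, iota_ext t _ Finset.subset_union_right,
    Finset.union_sdiff_left, Finset.union_sdiff_right]

/-- split off the k-th term of iotaL and extract X k from the rest -/
lemma iotaL_split (u : Fin n → K) (k : Fin n) (hk : k ∈ lsupp u) :
    iotaL u = C (u k) * ∏ j ∈ (lsupp u).erase k, X j
      + X k * ∑ i ∈ (lsupp u).erase k, C (u i) * ∏ j ∈ ((lsupp u).erase k).erase i, X j := by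
  rw [iotaL, ← Finset.add_sum_erase _ _ hk, Finset.mul_sum]
  congr 1
  refine Finset.sum_congr rfl fun i hi => ?_
  obtain ⟨hik, hiu⟩ := Finset.mem_erase.mp hi
  have hku : k ∈ (lsupp u).erase i := Finset.mem_erase.mpr ⟨fun h => hik h.symm, hk⟩
  rw [← Finset.mul_prod_erase _ _ hku, Finset.erase_right_comm]
  ring

lemma cancel_expand (s t : Fin n → K) (k : Fin n)
    (hAB : lsupp s ∩ lsupp t = {k}) (hc : s k + t k = 0) :
    iotaL (s + t)
      = (∑ i ∈ (lsupp s).erase k, C (s i) * ∏ j ∈ ((lsupp s).erase k).erase i, X j)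
          * ∏ j ∈ (lsupp t).erase k, X j
        + (∑ i ∈ (lsupp t).erase k, C (t i) * ∏ j ∈ ((lsupp t).erase k).erase i, X j)
          * ∏ j ∈ (lsupp s).erase k, X j := by
  have hkA : k ∈ lsupp s := (Finset.mem_inter.mp (hAB ▸ Finset.mem_singleton_self k)).1
  have hkB : k ∈ lsupp t := (Finset.mem_inter.mp (hAB ▸ Finset.mem_singleton_self k)).2
  have hinter : ∀ i : Fin n, i ∈ lsupp s → i ∈ lsupp t → i = k := fun i h1 h2 =>
    Finset.mem_singleton.mp (hAB ▸ Finset.mem_inter.mpr ⟨h1, h2⟩)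
  -- support of s+t
  have hU : lsupp (s + t) = ((lsupp s).erase k) ∪ ((lsupp t).erase k) := by
    ext i
    simp only [Finset.mem_union, Finset.mem_erase, mem_lsupp]
    constructor
    · intro hi
      by_cases hik : i = k
      · exact absurd (by simpa [hik] using hi) (by simp [hc] : ¬ s k + t k ≠ 0)
      · by_cases hs : s i ≠ 0
        · exact Or.inl ⟨hik, hs⟩
        · push_neg at hs
          refine Or.inr ⟨hik, fun h => hi ?_⟩
          simp [Pi.add_apply, hs, h]
    · rintro (⟨hik, hs⟩ | ⟨hik, ht⟩)
      · have ht0 : t i = 0 := by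
          by_contra ht
          exact hik (hinter i (mem_lsupp.mpr hs) (mem_lsupp.mpr ht))
        simpa [Pi.add_apply, ht0] using hs
      · have hs0 : s i = 0 := by
          by_contra hs
          exact hik (hinter i (mem_lsupp.mpr hs) (mem_lsupp.mpr ht))
        simpa [Pi.add_apply, hs0] using ht
  have hdisj : Disjoint ((lsupp s).erase k) ((lsupp t).erase k) := by
    refine Finset.disjoint_left.mpr fun j hj hj' => ?_
    obtain ⟨hjk, hjs⟩ := Finset.mem_erase.mp hj
    exact hjk (hinter j hjs (Finset.mem_of_mem_erase hj'))
  rw [iotaL, hU, Finset.sum_union hdisj, Finset.sum_mul, Finset.sum_mul]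
  congr 1
  · refine Finset.sum_congr rfl fun i hi => ?_
    obtain ⟨hik, his⟩ := Finset.mem_erase.mp hi
    have ht0 : t i = 0 := by
      by_contra ht
      exact hik (hinter i his (mem_lsupp.mpr ht))
    have hcoef : (s + t) i = s i := by simp [ht0]
    have hiQ : i ∉ (lsupp t).erase k :=
      fun h => (mem_lsupp.mp (Finset.mem_of_mem_erase h)) ht0
    have hset : (((lsupp s).erase k) ∪ ((lsupp t).erase k)).erase i
        = (((lsupp s).erase k).erase i) ∪ ((lsupp t).erase k) := by
      ext j
      simp only [Finset.mem_erase, Finset.mem_union]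
      have hiQ' : ¬ (i ≠ k ∧ i ∈ lsupp t) := fun h => hiQ (Finset.mem_erase.mpr h)
      aesop
    have hdisj2 : Disjoint (((lsupp s).erase k).erase i) ((lsupp t).erase k) :=
      Finset.disjoint_of_subset_left (Finset.erase_subset _ _) hdisj
    rw [hset, Finset.prod_union hdisj2, hcoef]
    ring
  · refine Finset.sum_congr rfl fun i hi => ?_
    obtain ⟨hik, hit⟩ := Finset.mem_erase.mp hi
    have hs0 : s i = 0 := by
      by_contra hs
      exact hik (hinter i (mem_lsupp.mpr hs) hit)
    have hcoef : (s + t) i = t i := by simp [hs0]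
    have hiP : i ∉ (lsupp s).erase k :=
      fun h => (mem_lsupp.mp (Finset.mem_of_mem_erase h)) hs0
    have hset : (((lsupp s).erase k) ∪ ((lsupp t).erase k)).erase i
        = ((lsupp s).erase k) ∪ (((lsupp t).erase k).erase i) := by
      ext j
      simp only [Finset.mem_erase, Finset.mem_union]
      have hiP' : ¬ (i ≠ k ∧ i ∈ lsupp s) := fun h => hiP (Finset.mem_erase.mpr h)
      aesop
    have hdisj2 : Disjoint ((lsupp s).erase k) (((lsupp t).erase k).erase i) :=
      Finset.disjoint_of_subset_right (Finset.erase_subset _ _) hdisj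
    rw [hset, Finset.prod_union hdisj2, hcoef]
    ring

/-- the key cancellation identity -/
lemma iotaL_cancel_identity (s t : Fin n → K) (k : Fin n)
    (hAB : lsupp s ∩ lsupp t = {k}) (hc : s k + t k = 0) :
    C (s k) * iotaL (s + t)
      = (∑ i ∈ (lsupp t).erase k, C (t i) * ∏ j ∈ ((lsupp t).erase k).erase i, X j) * iotaL s
        - (∑ i ∈ (lsupp s).erase k, C (s i) * ∏ j ∈ ((lsupp s).erase k).erase i, X j)
            * iotaL t := by
  have hkA : k ∈ lsupp s := (Finset.mem_inter.mp (hAB ▸ Finset.mem_singleton_self k)).1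
  have hkB : k ∈ lsupp t := (Finset.mem_inter.mp (hAB ▸ Finset.mem_singleton_self k)).2
  have htk : t k = -(s k) := eq_neg_of_add_eq_zero_right hc
  rw [cancel_expand s t k hAB hc, iotaL_split s k hkA, iotaL_split t k hkB, htk, map_neg]
  ring

/-- the key membership lemma: if the supports of `s` and `t` meet in at most one index,
then `ι(s+t)` lies in the ideal generated by `ι(s)` and `ι(t)`. -/
lemma iotaL_add_mem_span (s t : Fin n → K) (h : (lsupp s ∩ lsupp t).card ≤ 1) :
    iotaL (s + t) ∈ Ideal.span {iotaL s, iotaL t} := by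
  have hs : iotaL s ∈ Ideal.span {iotaL s, iotaL t} := Ideal.subset_span (by simp)
  have ht : iotaL t ∈ Ideal.span {iotaL s, iotaL t} := Ideal.subset_span (by simp)
  rcases Finset.eq_empty_or_nonempty (lsupp s ∩ lsupp t) with he | ⟨k, hk⟩
  · rw [iotaL_add_of_no_cancel s t (fun i hi => absurd hi (by simp [he]))]
    exact Ideal.add_mem _ (Ideal.mul_mem_left _ _ hs) (Ideal.mul_mem_left _ _ ht)
  · have hsk : lsupp s ∩ lsupp t = {k} :=
      Finset.eq_singleton_iff_unique_mem.mpr ⟨hk, fun j hj => Finset.card_le_one.mp h j hj k hk⟩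
    by_cases hc : s k + t k = 0
    · have hskne : s k ≠ 0 :=
        mem_lsupp.mp (Finset.mem_inter.mp (hsk ▸ Finset.mem_singleton_self k)).1
    
      have hkey := iotaL_cancel_identity s t k hsk hc
      have heq : iotaL (s + t) = C (s k)⁻¹ * (C (s k) * iotaL (s + t)) := by
        rw [← mul_assoc, ← map_mul, inv_mul_cancel₀ hskne, map_one, one_mul]
      rw [heq, hkey]
      exact Ideal.mul_mem_left _ _
        (Ideal.sub_mem _ (Ideal.mul_mem_left _ _ hs) (Ideal.mul_mem_left _ _ ht))
    · rw [iotaL_add_of_no_cancel s t (fun i hi => by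
        rw [hsk, Finset.mem_singleton] at hi
        rw [hi]; exact hc)]
      exact Ideal.add_mem _ (Ideal.mul_mem_left _ _ hs) (Ideal.mul_mem_left _ _ ht)

/-- Lemma 4.2: if `r` is induced from `ℜ`, i.e. `r = ∑ᵢ aᵢ rᵢ` with `rᵢ ∈ ℜ` and
`|supp(rᵢ) ∩ (supp(r₁) ∪ ⋯ ∪ supp(r_{i-1}))| ≤ 1` for each `i ≥ 2`, then `ι(r) ∈ J(ℜ)`. -/
theorem iotaL_induced_mem_Jid
    {V : Type*} [AddCommGroup V] [Module K V] [FiniteDimensional K V]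
    (α : Fin n → Module.Dual K V) (hne : ∀ i, α i ≠ 0)
    (hdist : ∀ i j, i ≠ j → LinearMap.ker (α i) ≠ LinearMap.ker (α j))
    (R : Set (Fin n → K)) (hR : ∀ r ∈ R, IsRel α r)
    (m : ℕ) (rr : Fin m → (Fin n → K)) (hrr : ∀ i, rr i ∈ R) (a : Fin m → K)
    (hind : ∀ i : Fin m,
      (lsupp (rr i) ∩ (Finset.Iio i).biUnion (fun j => lsupp (rr j))).card ≤ 1) :
    iotaL (∑ i, a i • rr i) ∈ Jid R := by
  classical
  have key : ∀ k : ℕ,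
      iotaL (∑ i ∈ Finset.univ.filter (fun i : Fin m => (i : ℕ) < k), a i • rr i) ∈ Jid R := by
    intro k
    induction k with
    | zero =>
      have : Finset.univ.filter (fun i : Fin m => (i : ℕ) < 0) = ∅ := by
        ext i; simp
      rw [this, Finset.sum_empty, iotaL_zero]
      exact Ideal.zero_mem _
    | succ k ih =>
      by_cases hk : k < m
      · set km : Fin m := ⟨k, hk⟩ with hkm
        have hfilter : Finset.univ.filter (fun i : Fin m => (i : ℕ) < k + 1)
            = insert km (Finset.univ.filter (fun i : Fin m => (i : ℕ) < k)) := by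
          ext i
          simp only [Finset.mem_filter, Finset.mem_insert, Finset.mem_univ, true_and, hkm,
            Fin.ext_iff]
          omega
        have hnot : km ∉ Finset.univ.filter (fun i : Fin m => (i : ℕ) < k) := by
          simp [hkm]
        rw [hfilter, Finset.sum_insert hnot, add_comm]
        set sprev : Fin n → K := ∑ i ∈ Finset.univ.filter (fun i : Fin m => (i : ℕ) < k),
          a i • rr i with hsprev
        -- support condition
        have hsub1 : lsupp sprev ⊆ (Finset.Iio km).biUnion (fun j => lsupp (rr j)) := by
          refine (lsupp_sum_subset _ _).trans ?_
          intro i hi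
          obtain ⟨j, hj, hij⟩ := Finset.mem_biUnion.mp hi
          refine Finset.mem_biUnion.mpr ⟨j, ?_, lsupp_smul_subset _ _ hij⟩
          simp only [Finset.mem_filter, Finset.mem_univ, true_and] at hj
          exact Finset.mem_Iio.mpr (Fin.lt_def.mpr hj)
        have hcard : (lsupp sprev ∩ lsupp (a km • rr km)).card ≤ 1 := by
          refine le_trans (Finset.card_le_card ?_) (hind km)
          intro i hi
          obtain ⟨h1, h2⟩ := Finset.mem_inter.mp hi
          exact Finset.mem_inter.mpr ⟨lsupp_smul_subset _ _ h2, hsub1 h1⟩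
        have hmem := iotaL_add_mem_span sprev (a km • rr km) (by
          refine le_trans (Finset.card_le_card ?_) hcard
          exact Finset.Subset.refl _)
        refine Ideal.span_le.mpr ?_ hmem
        intro p hp
        rcases Set.mem_insert_iff.mp hp with rfl | hp
        · exact ih
        · rw [Set.mem_singleton_iff.mp hp, iotaL_smul]
          exact Ideal.mul_mem_left _ _ (Ideal.subset_span ⟨rr km, hrr km, rfl⟩)
      · have : Finset.univ.filter (fun i : Fin m => (i : ℕ) < k + 1)
            = Finset.univ.filter (fun i : Fin m => (i : ℕ) < k) := by
          ext i
          simp only [Finset.mem_filter, Finset.mem_univ, true_and]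
          have := i.isLt
          omega
        rw [this]
        exact ih
  have huniv : Finset.univ.filter (fun i : Fin m => (i : ℕ) < m) = Finset.univ := by
    ext i; simp [i.isLt]
  have := key m
  rwa [huniv] at this

end
end

section
/- Let ℜ ⊆ F(𝒜) and let Γ ∈ co(ℜ). Then Q_Γ(ℜ) is a minimal prime ideal of J(ℜ) if and only if Q_{Γ'}(ℜ) ⊄ Q_Γ(ℜ) for every ℜ-cover Γ' with Γ' ⊊ Γ. -/
open MvPolynomial

noncomputable section

variable {K : Type*} [Field K] {n : ℕ}

/-- `Γ ∈ co(ℜ)`: `Γ` is an `ℜ`-cover, i.e. `|Γ ∩ supp(r)| ≠ 1` for every `r ∈ ℜ`. -/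
def IsCover (R : Set (Fin n → K)) (Γ : Finset (Fin n)) : Prop :=
  ∀ r ∈ R, (Γ ∩ lsupp r).card ≠ 1

/-- `ℜ₀(Γ) = {r ∈ ℜ : Γ ∩ supp(r) = ∅}`. -/
def R0 (R : Set (Fin n → K)) (Γ : Finset (Fin n)) : Set (Fin n → K) :=
  {r ∈ R | Γ ∩ lsupp r = ∅}

/-- `Q_Γ(ℜ) = (xᵢ : i ∈ Γ) + I(ℜ₀(Γ))`. -/
def Qid (R : Set (Fin n → K)) (Γ : Finset (Fin n)) : Ideal (MvPolynomial (Fin n) K) :=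
  Ideal.span ((fun i => (X i : MvPolynomial (Fin n) K)) '' ↑Γ) ⊔ Iid (R0 R Γ)


section OTAux


open Classical in
def gsupp {ι : Type*} [Fintype ι] (a : ι → K) : Finset ι :=
  Finset.univ.filter (fun i => a i ≠ 0)

variable {ι : Type*} [Fintype ι] [DecidableEq ι]

lemma mem_gsupp {a : ι → K} {i : ι} : i ∈ gsupp a ↔ a i ≠ 0 := by
  classical
  simp [gsupp]

def iotaG (a : ι → K) : MvPolynomial ι K :=
  ∑ i ∈ gsupp a, C (a i) * ∏ j ∈ (gsupp a).erase i, X j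

def iotaD (D : Finset ι) : (ι → K) →ₗ[K] MvPolynomial ι K where
  toFun a := ∑ i ∈ D, C (a i) * ∏ j ∈ D.erase i, X j
  map_add' a b := by
    simp only [Pi.add_apply, map_add, add_mul, Finset.sum_add_distrib]
  map_smul' c a := by
    simp only [Pi.smul_apply, smul_eq_mul, map_mul, RingHom.id_apply, Finset.smul_sum,
      smul_eq_C_mul, mul_assoc]

lemma iotaD_eq_prod_mul {a : ι → K} {D : Finset ι} (h : gsupp a ⊆ D) :
    iotaD D a = (∏ j ∈ D \ gsupp a, X j) * iotaG a := by
  have h1 : iotaD D a = ∑ i ∈ gsupp a, C (a i) * ∏ j ∈ D.erase i, X j := by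
    refine (Finset.sum_subset h ?_).symm
    intro i _ hig
    rw [mem_gsupp, not_not] at hig
    simp [hig]
  rw [h1, iotaG, Finset.mul_sum]
  refine Finset.sum_congr rfl ?_
  intro i hi
  have hsplit : D.erase i = (D \ gsupp a) ∪ (gsupp a).erase i := by
    ext j
    simp only [Finset.mem_erase, Finset.mem_union, Finset.mem_sdiff]
    constructor
    · rintro ⟨hji, hjD⟩
      by_cases hjg : j ∈ gsupp a
      · exact Or.inr ⟨hji, hjg⟩
      · exact Or.inl ⟨hjD, hjg⟩
    · rintro (⟨hjD, hjg⟩ | ⟨hji, hjg⟩)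
      · refine ⟨?_, hjD⟩
        rintro rfl
        exact hjg hi
      · exact ⟨hji, h hjg⟩
  have hdisj : Disjoint (D \ gsupp a) ((gsupp a).erase i) := by
    refine Finset.disjoint_left.mpr ?_
    intro j hj hj'
    exact (Finset.mem_sdiff.mp hj).2 (Finset.mem_of_mem_erase hj')
  rw [hsplit, Finset.prod_union hdisj]
  ring

lemma iotaG_eq_iotaD (a : ι → K) : iotaG a = iotaD (gsupp a) a := by
  simp [iotaG, iotaD]

lemma rename_iotaG {ι' : Type*} [Fintype ι'] [DecidableEq ι']
    (e : ι' → ι) (he : Function.Injective e) (a : ι' → K) (a' : ι → K)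
    (h1 : ∀ j, a' (e j) = a j) (h2 : ∀ i, (∀ j, e j ≠ i) → a' i = 0) :
    rename e (iotaG a) = iotaG a' := by
  have hsupp : gsupp a' = (gsupp a).map ⟨e, he⟩ := by
    ext i
    simp only [mem_gsupp, Finset.mem_map, Function.Embedding.coeFn_mk]
    constructor
    · intro h
      by_cases hex : ∃ j, e j = i
      · obtain ⟨j, rfl⟩ := hex
        exact ⟨j, by rw [← h1 j]; exact h, rfl⟩
      · push_neg at hex
        exact absurd (h2 i hex) h
    · rintro ⟨j, hj, rfl⟩
      rw [h1 j]
      exact hj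
  rw [iotaG, map_sum, iotaG, hsupp, Finset.sum_map]
  refine Finset.sum_congr rfl ?_
  intro j hj
  have herase := Finset.map_erase (⟨e, he⟩ : ι' ↪ ι) (gsupp a) j
  simp only [Function.Embedding.coeFn_mk] at herase
  rw [map_mul, rename_C, map_prod, Function.Embedding.coeFn_mk, h1 j,
    ← herase, Finset.prod_map]
  simp [rename_X]


lemma prod_X_mul_mem {p : Ideal (MvPolynomial ι K)} (hp : p.IsPrime) {s : Finset ι}
    {f : MvPolynomial ι K} (h : (∏ j ∈ s, X j) * f ∈ p) (hs : ∀ j ∈ s, (X j : MvPolynomial ι K) ∉ p) :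
    f ∈ p := by
  induction s using Finset.induction_on with
  | empty => simpa using h
  | insert x s' hx ih =>
    rw [Finset.prod_insert hx, mul_assoc] at h
    rcases hp.mem_or_mem h with h1 | h2
    · exact absurd h1 (hs x (Finset.mem_insert_self x s'))
    · exact ih h2 (fun j hj => hs j (Finset.mem_insert_of_mem hj))

lemma iotaG_mem_of_span {p : Ideal (MvPolynomial ι K)} (hp : p.IsPrime)
    {T : Set (ι → K)} (hT : ∀ r ∈ T, iotaG r ∈ p)
    (hX : ∀ r ∈ T, ∀ i, r i ≠ 0 → (X i : MvPolynomial ι K) ∉ p) :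
    ∀ a ∈ Submodule.span K T, iotaG a ∈ p := by
  intro a ha
  rcases Submodule.mem_span_set.mp ha with ⟨c, hcs, rfl⟩
  set a := c.sum fun mi r => r • mi with hadef
  set D := c.support.sup gsupp with hD
  have hsub : ∀ b ∈ c.support, gsupp b ⊆ D := fun b hb => Finset.le_sup hb
  have hga : gsupp a ⊆ D := by
    intro i hi
    rw [mem_gsupp] at hi
    by_contra hiD
    apply hi
    rw [hadef, Finsupp.sum_apply']
    refine Finset.sum_eq_zero ?_
    intro b hb
    have : b i = 0 := by
      by_contra hbi
      exact hiD (hsub b hb (mem_gsupp.mpr hbi))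
    simp [this]
  have hID : iotaD D a ∈ p := by
    rw [hadef, map_finsuppSum]
    refine Ideal.sum_mem p ?_
    intro b hb
    show iotaD D (c b • b) ∈ p
    rw [map_smul, iotaD_eq_prod_mul (hsub b hb)]
    rw [smul_eq_C_mul]
    exact Ideal.mul_mem_left _ _ (Ideal.mul_mem_left _ _ (hT b (hcs hb)))
  rw [iotaD_eq_prod_mul hga] at hID
  refine prod_X_mul_mem hp hID ?_
  intro j hj
  have hjD : j ∈ D := (Finset.mem_sdiff.mp hj).1
  rcases Finset.mem_sup.mp hjD with ⟨b, hb, hjb⟩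
  exact hX b (hcs hb) j (mem_gsupp.mp hjb)

lemma sub_aeval_mem (v : ι → MvPolynomial ι K) (f : MvPolynomial ι K) :
    f - aeval v f ∈ Ideal.span (Set.range fun i => (X i : MvPolynomial ι K) - v i) := by
  induction f using MvPolynomial.induction_on with
  | C a => simp [aeval_C, algebraMap_eq]
  | add f g hf hg =>
    rw [map_add]
    have : f + g - (aeval v f + aeval v g) = (f - aeval v f) + (g - aeval v g) := by ring
    rw [this]
    exact Ideal.add_mem _ hf hg
  | mul_X f i hf =>
    rw [map_mul, aeval_X]
    have : f * X i - aeval v f * v i = f * (X i - v i) + (f - aeval v f) * v i := by ring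
    rw [this]
    refine Ideal.add_mem _ ?_ (Ideal.mul_mem_right _ _ hf)
    exact Ideal.mul_mem_left _ _ (Ideal.subset_span ⟨i, rfl⟩)


section Forms

variable {σ : Type*} [Fintype σ] [DecidableEq σ]

def lformL : (σ → K) →ₗ[K] MvPolynomial σ K where
  toFun v := ∑ t, C (v t) * X t
  map_add' a b := by
    simp only [Pi.add_apply, map_add, add_mul, Finset.sum_add_distrib]
  map_smul' c a := by
    simp only [Pi.smul_apply, smul_eq_mul, map_mul, RingHom.id_apply, Finset.smul_sum,
      smul_eq_C_mul, mul_assoc]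

lemma lformL_eq_zero_iff {v : σ → K} : lformL v = 0 ↔ v = 0 := by
  constructor
  · intro h
    funext t
    have := congrArg (coeff (Finsupp.single t 1)) h
    rw [lformL] at this
    simp only [LinearMap.coe_mk, AddHom.coe_mk, coeff_sum, coeff_zero] at this
    rw [Finset.sum_eq_single t] at this
    · simpa [coeff_C_mul, MvPolynomial.coeff_X] using this
    · intro s _ hst
      rw [coeff_C_mul, MvPolynomial.coeff_X', if_neg, mul_zero]
      intro hss
      exact hst (by
        have := Finsupp.single_left_injective (one_ne_zero (α := ℕ)) hss
        exact this)
    · intro h; exact absurd (Finset.mem_univ t) h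
  · rintro rfl
    simp [lformL]

variable (K σ) in
abbrev FF : Type _ := FractionRing (MvPolynomial σ K)

def uu (v : σ → K) : FF K σ := algebraMap (MvPolynomial σ K) (FF K σ) (lformL v)

lemma uu_ne_zero {v : σ → K} (hv : v ≠ 0) : uu v ≠ 0 := by
  intro h
  apply hv
  rw [← lformL_eq_zero_iff (K := K)]
  apply IsFractionRing.injective (MvPolynomial σ K) (FF K σ)
  simpa [uu] using h

variable {κ : Type*} [Fintype κ] [DecidableEq κ]

def Gpoly (h : κ → σ → K) (M : ℕ) (q : MvPolynomial κ K) : MvPolynomial σ K :=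
  ∑ μ ∈ q.support, (q.coeff μ) • ∏ j, (lformL (h j) : MvPolynomial σ K) ^ (M - μ j)

lemma clearing (h : κ → σ → K) (hh : ∀ j, h j ≠ 0) (M : ℕ) (q : MvPolynomial κ K)
    (hq : ∀ μ ∈ q.support, ∀ j, μ j ≤ M) :
    (∏ j, (uu (h j)) ^ M) * aeval (fun j => (uu (h j))⁻¹) q
      = algebraMap (MvPolynomial σ K) (FF K σ) (Gpoly h M q) := by
  conv_lhs => rw [q.as_sum]
  rw [map_sum, Finset.mul_sum, Gpoly, map_sum]
  refine Finset.sum_congr rfl ?_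
  intro μ hμ
  rw [aeval_monomial, Finsupp.prod_pow, Algebra.smul_def, map_mul, map_prod,
    ← IsScalarTower.algebraMap_apply]
  rw [mul_left_comm]
  congr 1
  rw [← Finset.prod_mul_distrib]
  refine Finset.prod_congr rfl ?_
  intro j _
  rw [inv_pow, ← pow_sub₀ _ (uu_ne_zero (hh j)) (hq μ hμ j)]
  rw [map_pow]
  rfl

lemma aeval_iotaG_eq_zero {ι : Type*} [Fintype ι] [DecidableEq ι]
    (v : ι → FF K σ) (gv : ι → σ → K) (a : ι → K)
    (hv : ∀ i ∈ gsupp a, v i = (uu (gv i))⁻¹)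
    (hg : ∀ i ∈ gsupp a, gv i ≠ 0)
    (hrel : ∑ i ∈ gsupp a, a i • gv i = 0) :
    aeval v (iotaG a) = 0 := by
  have hune : ∀ i ∈ gsupp a, uu (gv i) ≠ 0 := fun i hi => uu_ne_zero (hg i hi)
  have hprod : (∏ i ∈ gsupp a, uu (gv i)) ≠ 0 := Finset.prod_ne_zero_iff.mpr hune
  have key : (∏ i ∈ gsupp a, uu (gv i)) * aeval v (iotaG a)
      = algebraMap (MvPolynomial σ K) (FF K σ) (lformL (∑ i ∈ gsupp a, a i • gv i)) := by
    rw [iotaG, map_sum, Finset.mul_sum, map_sum, map_sum]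
    refine Finset.sum_congr rfl ?_
    intro i hi
    rw [map_mul, aeval_C, map_prod]
    have hterm : ∀ j ∈ (gsupp a).erase i, aeval v (X j : MvPolynomial ι K) = (uu (gv j))⁻¹ := by
      intro j hj
      rw [aeval_X, hv j (Finset.mem_of_mem_erase hj)]
    rw [Finset.prod_congr rfl hterm]
    rw [← Finset.mul_prod_erase _ _ hi]
    have : (uu (gv i) * ∏ j ∈ (gsupp a).erase i, uu (gv j)) *
        (algebraMap K _ (a i) * ∏ j ∈ (gsupp a).erase i, (uu (gv j))⁻¹)
        = algebraMap K _ (a i) * uu (gv i) *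
          ∏ j ∈ (gsupp a).erase i, (uu (gv j) * (uu (gv j))⁻¹) := by
      rw [Finset.prod_mul_distrib]; ring
    rw [this, Finset.prod_congr rfl (fun j hj => mul_inv_cancel₀ (hune j (Finset.mem_of_mem_erase hj))),
      Finset.prod_const_one, mul_one, map_smul, Algebra.smul_def, map_mul,
      ← IsScalarTower.algebraMap_apply]
    rfl
  rw [hrel, map_zero, map_zero] at key
  exact (mul_eq_zero.mp key).resolve_left hprod


lemma uu_smul (c : K) (v : σ → K) : uu (c • v) = algebraMap K (FF K σ) c * uu (v) := by
  rw [uu, map_smul, Algebra.smul_def, map_mul, ← IsScalarTower.algebraMap_apply]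
  rfl

end Forms

section Lifting

variable {ι : Type*} [Fintype ι] [DecidableEq ι]

lemma gsupp_pair {i1 i2 : ι} (hne : i1 ≠ i2) {c1 c2 : K} (h1 : c1 ≠ 0) (h2 : c2 ≠ 0) :
    gsupp (fun i => if i = i1 then c1 else if i = i2 then c2 else (0:K)) = {i1, i2} := by
  ext i
  rw [mem_gsupp]
  rcases eq_or_ne i i1 with rfl | hi1
  · simp [h1]
  · rcases eq_or_ne i i2 with rfl | hi2
    · simp [h2, hne.symm, hi1]
    · simp [hi1, hi2]

lemma iotaG_pair {i1 i2 : ι} (hne : i1 ≠ i2) {c1 c2 : K} (h1 : c1 ≠ 0) (h2 : c2 ≠ 0) :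
    iotaG (fun i => if i = i1 then c1 else if i = i2 then c2 else (0:K))
      = C c1 * X i2 + C c2 * X i1 := by
  rw [iotaG, gsupp_pair hne h1 h2]
  have hpair : ({i1, i2} : Finset ι) = insert i1 {i2} := rfl
  rw [hpair, Finset.sum_insert (by simp [hne]), Finset.sum_singleton]
  have e1 : (insert i1 {i2} : Finset ι).erase i1 = {i2} := by
    rw [Finset.erase_insert (by simp [hne])]
  have e2 : (insert i1 {i2} : Finset ι).erase i2 = {i1} := by
    ext j
    simp only [Finset.mem_erase, Finset.mem_insert, Finset.mem_singleton]
    constructor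
    · rintro ⟨hj2, rfl | rfl⟩
      · rfl
      · exact absurd rfl hj2
    · rintro rfl
      exact ⟨hne, Or.inl rfl⟩
  rw [e1, e2, Finset.prod_singleton, Finset.prod_singleton]
  simp [hne, hne.symm]

variable {κ : Type*} [Fintype κ] [DecidableEq κ]

lemma rename_some_iotaG (w : κ → K) :
    rename (some : κ → Option κ) (iotaG w) = iotaG (fun o => Option.elim o 0 w) := by
  refine rename_iotaG _ (Option.some_injective κ) w _ (fun j => rfl) ?_
  intro i hni
  cases i with
  | none => rfl
  | some j => exact absurd rfl (hni j)

lemma iotaG_lift (w : κ → K) (lam : K) (hlam : lam ≠ 0) :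
    iotaG (fun o : Option κ => Option.elim o (-lam) w)
      = X none * rename (some : κ → Option κ) (iotaG w)
        - C lam * ∏ j ∈ gsupp w, X (some j) := by
  classical
  set wh : Option κ → K := fun o => Option.elim o (-lam) w with hwh
  have hsupp : gsupp wh = insert none ((gsupp w).map ⟨some, Option.some_injective κ⟩) := by
    ext o
    cases o with
    | none => simp [mem_gsupp, hwh, hlam]
    | some j => simp [mem_gsupp, hwh]
  have hnone_mem : (none : Option κ) ∉ (gsupp w).map ⟨some, Option.some_injective κ⟩ := by
    simp
  rw [iotaG, hsupp, Finset.sum_insert hnone_mem]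
  have hterm0 : C (wh none) * ∏ j ∈ (insert none ((gsupp w).map ⟨some, Option.some_injective κ⟩)).erase none, X j
      = - (C lam * ∏ j ∈ gsupp w, X (some j)) := by
    rw [Finset.erase_insert hnone_mem, Finset.prod_map]
    have : wh none = -lam := rfl
    rw [this, map_neg, neg_mul]
    rfl
  rw [hterm0, Finset.sum_map]
  have hterm : ∀ j ∈ gsupp w,
      C (wh ((⟨some, Option.some_injective κ⟩ : κ ↪ Option κ) j)) *
        ∏ o ∈ (insert none ((gsupp w).map ⟨some, Option.some_injective κ⟩)).erase
            ((⟨some, Option.some_injective κ⟩ : κ ↪ Option κ) j), X o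
      = X none * (C (w j) * ∏ o ∈ ((gsupp w).erase j).map ⟨some, Option.some_injective κ⟩, X o) := by
    intro j hj
    have herase : (insert none ((gsupp w).map ⟨some, Option.some_injective κ⟩)).erase (some j)
        = insert none (((gsupp w).erase j).map ⟨some, Option.some_injective κ⟩) := by
      rw [Finset.map_erase]
      rw [Finset.erase_insert_of_ne (by simp)]
      rfl
    have hco : ((⟨some, Option.some_injective κ⟩ : κ ↪ Option κ) j) = some j := rfl
    rw [hco, herase, Finset.prod_insert (by simp)]
    have : wh (some j) = w j := rfl
    rw [hco] at *
    show C (wh (some j)) * (X none * ∏ o ∈ ((gsupp w).erase j).map _, X o) = _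
    rw [this]
    ring
  rw [Finset.sum_congr rfl hterm]
  rw [← Finset.mul_sum]
  have : ∑ j ∈ gsupp w, (C (w j) * ∏ o ∈ ((gsupp w).erase j).map ⟨some, Option.some_injective κ⟩, X o)
      = rename (some : κ → Option κ) (iotaG w) := by
    rw [iotaG, map_sum]
    refine (Finset.sum_congr rfl ?_)
    intro j hj
    rw [map_mul, rename_C, map_prod, Finset.prod_map]
    simp [rename_X]
  rw [this]
  ring

lemma optionEquivLeft_rename_some (q : MvPolynomial κ K) :
    optionEquivLeft K κ (rename (some : κ → Option κ) q) = Polynomial.C q := by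
  induction q using MvPolynomial.induction_on with
  | C a =>
    rw [rename_C]
    rw [show (optionEquivLeft K κ) (C a) = Polynomial.C (C a) from optionEquivLeft_C K κ a]
  | add p q hp hq => rw [map_add, map_add, hp, hq, map_add]
  | mul_X p j hp => rw [map_mul, map_mul, hp, rename_X, optionEquivLeft_X_some, ← map_mul]

lemma option_decomp (f : MvPolynomial (Option κ) K) (n : ℕ)
    (hn : (optionEquivLeft K κ f).natDegree < n) :
    f = ∑ k ∈ Finset.range n,
      rename (some : κ → Option κ) ((optionEquivLeft K κ f).coeff k) * X none ^ k := by
  apply (optionEquivLeft K κ).injective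
  rw [map_sum]
  conv_lhs => rw [(optionEquivLeft K κ f).as_sum_range' n hn]
  refine Finset.sum_congr rfl ?_
  intro k _
  rw [map_mul, map_pow, optionEquivLeft_X_none, optionEquivLeft_rename_some,
    ← Polynomial.smul_X_eq_monomial]
  rw [Polynomial.smul_eq_C_mul]

end Lifting



section OTMain

variable {σ : Type*} [Fintype σ] [DecidableEq σ]

def Wset {ι : Type*} [Fintype ι] (g : ι → σ → K) : Set (ι → K) := {a | ∑ i, a i • g i = 0}

def Iidg {ι : Type*} [Fintype ι] [DecidableEq ι] (g : ι → σ → K) : Ideal (MvPolynomial ι K) :=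
  Ideal.span (iotaG '' Wset g)

def phig {ι : Type*} (g : ι → σ → K) : MvPolynomial ι K →ₐ[K] FF K σ :=
  aeval (fun i => (uu (g i))⁻¹)

lemma phig_iotaG_eq_zero {ι : Type*} [Fintype ι] [DecidableEq ι] {g : ι → σ → K}
    (hg : ∀ i, g i ≠ 0) {a : ι → K} (ha : a ∈ Wset g) : phig g (iotaG a) = 0 := by
  refine aeval_iotaG_eq_zero _ g a (fun i _ => rfl) (fun i _ => hg i) ?_
  rw [Finset.sum_subset (Finset.subset_univ (gsupp a)) ?_]
  · exact ha
  · intro i _ hig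
    rw [mem_gsupp, not_not] at hig
    rw [hig, zero_smul]

lemma Iidg_phig_eq_zero {ι : Type*} [Fintype ι] [DecidableEq ι] {g : ι → σ → K}
    (hg : ∀ i, g i ≠ 0) {f : MvPolynomial ι K} (hf : f ∈ Iidg g) : phig g f = 0 := by
  have hle : Iidg g ≤ RingHom.ker (phig g : MvPolynomial ι K →ₐ[K] FF K σ) := by
    rw [Iidg, Ideal.span_le]
    rintro s ⟨a, ha, rfl⟩
    exact phig_iotaG_eq_zero hg ha
  exact hle hf

lemma rename_some_mem_Iidg {κ : Type*} [Fintype κ] [DecidableEq κ] {g : Option κ → σ → K}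
    {q : MvPolynomial κ K} (hq : q ∈ Iidg (fun j => g (some j))) :
    rename (some : κ → Option κ) q ∈ Iidg g := by
  have hmem := Ideal.mem_map_of_mem (rename (some : κ → Option κ)) hq
  rw [Iidg, Ideal.map_span] at hmem
  refine Ideal.span_le.mpr ?_ hmem
  rintro s ⟨t, ⟨w, hw, rfl⟩, rfl⟩
  rw [rename_some_iotaG]
  refine Ideal.subset_span ⟨_, ?_, rfl⟩
  show ∑ o : Option κ, (Option.elim o 0 w) • g o = 0
  rw [Fintype.sum_option]
  have hw' : ∑ i, w i • g (some i) = 0 := hw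
  simpa using hw'

lemma OT_transport {ι ι' : Type*} [Fintype ι] [DecidableEq ι] [Fintype ι'] [DecidableEq ι']
    (e : ι' ≃ ι) (g : ι → σ → K)
    (H : ∀ q, phig (fun j => g (e j)) q = 0 → q ∈ Iidg (fun j => g (e j))) :
    ∀ f, phig g f = 0 → f ∈ Iidg g := by
  intro f hf
  have hf' : phig (fun j => g (e j)) (rename (e.symm : ι → ι') f) = 0 := by
    rw [phig, aeval_rename]
    have h2 : ((fun j => (uu (g (e j)))⁻¹) ∘ (e.symm : ι → ι')) = fun i => (uu (g i))⁻¹ := by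
      funext i; simp
    rw [h2]
    exact hf
  have hmem := Ideal.mem_map_of_mem (rename (e : ι' → ι)) (H _ hf')
  rw [Iidg, Ideal.map_span] at hmem
  have hren : rename (e : ι' → ι) (rename (e.symm : ι → ι') f) = f := by
    rw [rename_rename]
    have : ((e : ι' → ι) ∘ (e.symm : ι → ι')) = id := by funext i; simp
    rw [this, rename_id, AlgHom.id_apply]
  rw [hren] at hmem
  refine Ideal.span_le.mpr ?_ hmem
  rintro s ⟨t, ⟨w, hw, rfl⟩, rfl⟩
  have hio : rename (e : ι' → ι) (iotaG w) = iotaG (fun i => w (e.symm i)) := by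
    refine rename_iotaG _ e.injective w _ (fun j => by simp) ?_
    intro i hni
    exact absurd (e.apply_symm_apply i) (hni (e.symm i))
  rw [hio]
  refine Ideal.subset_span ⟨_, ?_, rfl⟩
  show ∑ i, w (e.symm i) • g i = 0
  rw [← Equiv.sum_comp e (fun i => w (e.symm i) • g i)]
  have hw' : ∑ x, w x • g (e x) = 0 := hw
  simpa using hw'

set_option maxHeartbeats 2000000 in
lemma OTstep {κ : Type*} [Fintype κ] [DecidableEq κ]
    (IH : ∀ g' : κ → σ → K, (∀ j, g' j ≠ 0) → ∀ q, phig g' q = 0 → q ∈ Iidg g')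
    (g : Option κ → σ → K) (hg : ∀ i, g i ≠ 0) :
    ∀ f, phig g f = 0 → f ∈ Iidg g := by
  classical
  obtain ⟨t0, ht0⟩ : ∃ t, g none t ≠ 0 := by
    by_contra h
    push_neg at h
    exact hg none (funext h)
  by_cases hA : ∃ j : κ, g (some j) = ((g (some j) t0) * (g none t0)⁻¹) • g none
  · -- Case A : some hyperplane proportional to the last one
    obtain ⟨j0, hj0⟩ := hA
    set cc := g (some j0) t0 * (g none t0)⁻¹ with hcc_def
    have hcc : cc ≠ 0 := by
      intro h
      apply hg (some j0)
      rw [hj0, h, zero_smul]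
    have hgj0 : g (some j0) = cc • g none := by rw [hj0]
    set w2 : Option κ → K := fun o => if o = none then cc else if o = some j0 then -1 else 0
      with hw2
    have hw2W : w2 ∈ Wset g := by
      show ∑ o : Option κ, w2 o • g o = 0
      rw [Fintype.sum_option]
      have h1 : w2 none = cc := by simp [hw2]
      have hsum : ∑ j : κ, w2 (some j) • g (some j) = -(cc • g none) := by
        rw [Finset.sum_eq_single_of_mem j0 (Finset.mem_univ j0) ?_]
        · have : w2 (some j0) = -1 := by simp [hw2]
          rw [this, neg_one_smul, hgj0]
        · intro b _ hb
          have : w2 (some b) = 0 := by simp [hw2, hb]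
          rw [this, zero_smul]
      rw [h1, hsum, add_neg_cancel]
    have hident : iotaG w2 = C cc * X (some j0) + C (-1) * X none :=
      iotaG_pair (by simp) hcc (by norm_num)
    have hgen : (X none : MvPolynomial (Option κ) K) - C cc * X (some j0) ∈ Iidg g := by
      have hmem : iotaG w2 ∈ Iidg g := Ideal.subset_span ⟨w2, hw2W, rfl⟩
      have heq : (X none : MvPolynomial (Option κ) K) - C cc * X (some j0) = -(iotaG w2) := by
        rw [hident, map_neg, map_one]
        ring
      rw [heq]
      exact neg_mem hmem
    set tv : Option κ → MvPolynomial (Option κ) K :=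
      fun o => Option.elim o (C cc * X (some j0)) (fun j => X (some j)) with htv
    intro f hf
    have hsub := sub_aeval_mem tv f
    have hspan : Ideal.span (Set.range fun i => (X i : MvPolynomial (Option κ) K) - tv i)
        ≤ Iidg g := by
      rw [Ideal.span_le]
      rintro s ⟨o, rfl⟩
      cases o with
      | none =>
        show (X none : MvPolynomial (Option κ) K) - tv none ∈ Iidg g
        exact hgen
      | some j =>
        show (X (some j) : MvPolynomial (Option κ) K) - tv (some j) ∈ Iidg g
        have : (X (some j) : MvPolynomial (Option κ) K) - tv (some j) = 0 := by
          simp [htv]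
        rw [this]
        exact Ideal.zero_mem _
    have hfsub : f - aeval tv f ∈ Iidg g := hspan hsub
    have hphikey : phig g (C cc * X (some j0) : MvPolynomial (Option κ) K)
        = (uu (g none))⁻¹ := by
      rw [map_mul]
      have h1 : phig g (C cc : MvPolynomial (Option κ) K) = algebraMap K (FF K σ) cc := by
        rw [phig, aeval_C]
      have h2 : phig g (X (some j0) : MvPolynomial (Option κ) K) = (uu (g (some j0)))⁻¹ := by
        rw [phig, aeval_X]
      have hccF : algebraMap K (FF K σ) cc ≠ 0 := by
        simpa using hcc
      rw [h1, h2, hgj0, uu_smul, mul_inv, ← mul_assoc, mul_inv_cancel₀ hccF, one_mul]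
    have hphi_comp : phig g (aeval tv f) = phig g f := by
      have hcomp : (phig g).comp (aeval tv) = (phig g : MvPolynomial (Option κ) K →ₐ[K] FF K σ) := by
        apply MvPolynomial.algHom_ext
        intro o
        rw [AlgHom.comp_apply, aeval_X]
        cases o with
        | none =>
          show phig g (C cc * X (some j0) : MvPolynomial (Option κ) K) = phig g (X none)
          rw [hphikey, phig, aeval_X]
        | some j => rfl
      calc phig g (aeval tv f) = ((phig g).comp (aeval tv)) f := rfl
        _ = phig g f := by rw [hcomp]
    set tv' : Option κ → MvPolynomial κ K :=
      fun o => Option.elim o (C cc * X j0) (fun j => X j) with htv'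
    have hrw : aeval tv f = rename (some : κ → Option κ) (aeval tv' f) := by
      have hcomp : (rename (some : κ → Option κ)).comp (aeval tv')
          = (aeval tv : MvPolynomial (Option κ) K →ₐ[K] MvPolynomial (Option κ) K) := by
        apply MvPolynomial.algHom_ext
        intro o
        rw [AlgHom.comp_apply, aeval_X, aeval_X]
        cases o with
        | none =>
          show rename (some : κ → Option κ) (C cc * X j0) = tv none
          rw [map_mul, rename_C, rename_X]
          rfl
        | some j =>
          show rename (some : κ → Option κ) (X j) = tv (some j)
          rw [rename_X]
          rfl
      rw [← hcomp]
      rfl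
    have hq0 : phig (fun j => g (some j)) (aeval tv' f) = 0 := by
      have hcompren : phig g (rename (some : κ → Option κ) (aeval tv' f))
          = phig (fun j => g (some j)) (aeval tv' f) := by
        rw [phig, aeval_rename]
        rfl
      rw [← hcompren, ← hrw, hphi_comp]
      exact hf
    have hmem := IH _ (fun j => hg (some j)) _ hq0
    have hmem2 : aeval tv f ∈ Iidg g := by
      rw [hrw]
      exact rename_some_mem_Iidg hmem
    have hfinal : f = (f - aeval tv f) + aeval tv f := by ring
    rw [hfinal]
    exact Ideal.add_mem _ hfsub hmem2
  · -- Case B : no hyperplane proportional to the last one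
    push_neg at hA
    set g' : κ → σ → K := fun j => g (some j) - ((g (some j) t0) * (g none t0)⁻¹) • g none
      with hg'def
    have hg' : ∀ j, g' j ≠ 0 := by
      intro j h
      apply hA j
      have := sub_eq_zero.mp h
      exact this
    set rv : σ → MvPolynomial σ K :=
      fun t => if t = t0 then X t0 - C (g none t0)⁻¹ * lformL (g none) else X t with hrv
    have hrho_l : ∀ v : σ → K,
        aeval rv ((lformL v : MvPolynomial σ K))
          = lformL (v - (v t0 * (g none t0)⁻¹) • g none) := by
      intro v
      have hl : (lformL v : MvPolynomial σ K) = ∑ t, C (v t) * X t := rfl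
      have hrhs : (lformL (v - (v t0 * (g none t0)⁻¹) • g none) : MvPolynomial σ K)
          = (∑ t, C (v t) * X t) - C (v t0) * (C ((g none t0)⁻¹) * lformL (g none)) := by
        rw [map_sub, map_smul, smul_eq_C_mul, map_mul]
        rw [hl]
        ring
      rw [hl, hrhs, map_sum]
      have hterm : ∀ t ∈ Finset.univ, aeval rv ((C (v t) * X t : MvPolynomial σ K))
          = C (v t) * X t -
            (if t = t0 then C (v t0) * (C ((g none t0)⁻¹) * lformL (g none)) else 0) := by
        intro t _
        rcases eq_or_ne t t0 with rfl | ht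
        · have hrvt : rv t = X t - C (g none t)⁻¹ * lformL (g none) := by
            rw [hrv]; simp
          rw [map_mul, aeval_C, aeval_X, if_pos rfl, hrvt, algebraMap_eq]
          ring
        · have hrvt : rv t = X t := by
            rw [hrv]; simp [ht]
          rw [map_mul, aeval_C, aeval_X, if_neg ht, hrvt, algebraMap_eq, sub_zero]
      rw [Finset.sum_congr rfl hterm, Finset.sum_sub_distrib,
        Finset.sum_ite_eq' Finset.univ t0
          (fun _ => C (v t0) * (C ((g none t0)⁻¹) * lformL (g none))),
        if_pos (Finset.mem_univ t0)]
    have hrho0 : aeval rv ((lformL (g none) : MvPolynomial σ K)) = 0 := by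
      rw [hrho_l, mul_inv_cancel₀ ht0, one_smul, sub_self, map_zero]
    have hrho_g : ∀ j, aeval rv ((lformL (g (some j)) : MvPolynomial σ K)) = lformL (g' j) :=
      fun j => hrho_l _
    suffices Hinner : ∀ (D : ℕ) (f : MvPolynomial (Option κ) K),
        (optionEquivLeft K κ f).natDegree ≤ D → phig g f = 0 → f ∈ Iidg g by
      intro f hf
      exact Hinner (optionEquivLeft K κ f).natDegree f le_rfl hf
    intro D
    induction D with
    | zero =>
      intro f hD hf
      have hdec := option_decomp f 1 (Nat.lt_succ_of_le hD)
      rw [Finset.sum_range_one, pow_zero, mul_one] at hdec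
      have hq : phig (fun j => g (some j)) ((optionEquivLeft K κ f).coeff 0) = 0 := by
        have h2 : phig g f = phig (fun j => g (some j)) ((optionEquivLeft K κ f).coeff 0) := by
          conv_lhs => rw [hdec]
          rw [phig, aeval_rename]
          rfl
        rw [← h2]
        exact hf
      have hmem := IH _ (fun j => hg (some j)) _ hq
      rw [hdec]
      exact rename_some_mem_Iidg hmem
    | succ D IHD =>
      intro f hD hf
      set p := optionEquivLeft K κ f with hp
      set qD := p.coeff (D+1) with hqDdef
      set gd : κ → σ → K := fun j => g (some j) with hgd
      have hgdne : ∀ j, gd j ≠ 0 := fun j => hg (some j)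
      set M := (Finset.range (D+2)).sup (fun k => (p.coeff k).totalDegree) with hM
      have hbound : ∀ k ∈ Finset.range (D+2), ∀ μ ∈ (p.coeff k).support, ∀ j, μ j ≤ M := by
        intro k hk μ hμ j
        have h1 : μ j ≤ μ.sum fun _ e => e := by
          rcases eq_or_ne (μ j) 0 with h | h
          · simp [h]
          · have hjs : j ∈ μ.support := Finsupp.mem_support_iff.mpr h
            rw [Finsupp.sum]
            exact Finset.single_le_sum (fun _ _ => Nat.zero_le _) hjs
        exact le_trans (le_trans h1 (le_totalDegree hμ)) (Finset.le_sup (f := fun k => (p.coeff k).totalDegree) hk)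
      have hdec := option_decomp f (D+2) (Nat.lt_succ_of_le hD)
      have hu0 : uu (g none) ≠ 0 := uu_ne_zero (hg none)
      have hphi_terms : phig g f = ∑ k ∈ Finset.range (D+2),
          phig gd (p.coeff k) * ((uu (g none))⁻¹) ^ k := by
        conv_lhs => rw [hdec]
        rw [map_sum]
        refine Finset.sum_congr rfl ?_
        intro k _
        rw [map_mul, map_pow]
        congr 1
        · rw [phig, aeval_rename]
          rfl
        · congr 1
          rw [phig, aeval_X]
      have heqF : ∑ k ∈ Finset.range (D+2),
          (algebraMap (MvPolynomial σ K) (FF K σ))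
            ((lformL (g none) : MvPolynomial σ K)^(D+1-k) * Gpoly gd M (p.coeff k)) = 0 := by
        have hstep : ∀ k ∈ Finset.range (D+2),
            (algebraMap (MvPolynomial σ K) (FF K σ))
              ((lformL (g none) : MvPolynomial σ K)^(D+1-k) * Gpoly gd M (p.coeff k))
            = (uu (g none))^(D+1) * (∏ j, (uu (gd j))^M)
              * (phig gd (p.coeff k) * ((uu (g none))⁻¹)^k) := by
          intro k hk
          rw [map_mul, map_pow]
          rw [← clearing gd hgdne M (p.coeff k) (hbound k hk)]
          have hpow : (algebraMap (MvPolynomial σ K) (FF K σ)) ((lformL (g none) : MvPolynomial σ K))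
              = uu (g none) := rfl
          rw [hpow]
          have hks : k ≤ D + 1 := by
            rw [Finset.mem_range] at hk
            omega
          have h2 : (uu (g none))^(D+1-k) = (uu (g none))^(D+1) * ((uu (g none))⁻¹)^k := by
            rw [inv_pow, pow_sub₀ _ hu0 hks]
          rw [h2, phig]
          ring
        rw [Finset.sum_congr rfl hstep, ← Finset.mul_sum, ← hphi_terms, hf, mul_zero]
      have heqR : ∑ k ∈ Finset.range (D+2),
          (lformL (g none) : MvPolynomial σ K)^(D+1-k) * Gpoly gd M (p.coeff k) = 0 := by
        apply IsFractionRing.injective (MvPolynomial σ K) (FF K σ)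
        rw [map_sum, map_zero]
        exact heqF
      have hGmap : ∀ q : MvPolynomial κ K,
          aeval rv (Gpoly gd M q) = Gpoly g' M q := by
        intro q
        rw [Gpoly, map_sum, Gpoly]
        refine Finset.sum_congr rfl ?_
        intro μ _
        rw [map_smul, map_prod]
        congr 1
        refine Finset.prod_congr rfl ?_
        intro j _
        rw [map_pow, hrho_g j]
      have hrhoEq : Gpoly g' M qD = 0 := by
        have hrr := congrArg (aeval rv : MvPolynomial σ K →ₐ[K] MvPolynomial σ K) heqR
        rw [map_sum, map_zero] at hrr
        have hterm : ∀ k ∈ Finset.range (D+2),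
            aeval rv ((lformL (g none) : MvPolynomial σ K)^(D+1-k) * Gpoly gd M (p.coeff k))
            = if k = D+1 then Gpoly g' M qD else 0 := by
          intro k hk
          rw [map_mul, map_pow, hrho0]
          rcases eq_or_ne k (D+1) with rfl | hkne
          · rw [if_pos rfl, Nat.sub_self, pow_zero, one_mul, hGmap]
          · rw [if_neg hkne]
            have : D + 1 - k ≠ 0 := by
              rw [Finset.mem_range] at hk
              omega
            rw [zero_pow this, zero_mul]
        rw [Finset.sum_congr rfl hterm,
          Finset.sum_ite_eq' (Finset.range (D+2)) (D+1) (fun _ => Gpoly g' M qD),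
          if_pos (Finset.mem_range.mpr (by omega))] at hrr
        exact hrr
      have hphiD : phig g' qD = 0 := by
        have hcl := clearing g' hg' M qD (hbound (D+1) (Finset.mem_range.mpr (by omega)))
        rw [hrhoEq, map_zero] at hcl
        have hprod : (∏ j, (uu (g' j))^M) ≠ 0 := by
          refine Finset.prod_ne_zero_iff.mpr ?_
          intro j _
          exact pow_ne_zero _ (uu_ne_zero (hg' j))
        rcases mul_eq_zero.mp hcl with h | h
        · exact absurd h hprod
        · exact h
      have hqDmem : qD ∈ Iidg g' := IH g' hg' qD hphiD
      -- lift the relations to Option κ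
      set lam : (κ → K) → K := fun w => ∑ j, w j * (g (some j) t0 * (g none t0)⁻¹) with hlam
      have hlift : ∀ w ∈ Wset g',
          (fun o : Option κ => Option.elim o (-(lam w)) w) ∈ Wset g := by
        intro w hw
        show ∑ o : Option κ, (Option.elim o (-(lam w)) w) • g o = 0
        rw [Fintype.sum_option]
        have hterm : ∀ j : κ, w j • g (some j)
            = w j • g' j + (w j * (g (some j) t0 * (g none t0)⁻¹)) • g none := by
          intro j
          have hgj : g' j = g (some j) - ((g (some j) t0) * (g none t0)⁻¹) • g none := rfl
          rw [hgj]
          module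
        have hsum : ∑ j, (Option.elim (some j) (-(lam w)) w) • g (some j) = lam w • g none := by
          have hre : ∀ j : κ, (Option.elim (some j) (-(lam w)) w) • g (some j)
              = w j • g (some j) := fun j => rfl
          rw [Finset.sum_congr rfl (fun j _ => hre j), Finset.sum_congr rfl (fun j _ => hterm j),
            Finset.sum_add_distrib]
          have h0 : ∑ j, w j • g' j = 0 := hw
          rw [h0, zero_add, hlam, ← Finset.sum_smul]
        rw [hsum]
        show (-(lam w)) • g none + lam w • g none = 0
        module
      have hkey : ∀ w ∈ Wset g',
          X none * rename (some : κ → Option κ) (iotaG w)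
            - C (lam w) * ∏ j ∈ gsupp w, X (some j) ∈ Iidg g := by
        intro w hw
        rcases eq_or_ne (lam w) 0 with h0 | hne0
        · rw [h0, map_zero, zero_mul, sub_zero, rename_some_iotaG]
          have hmem : iotaG (fun o : Option κ => Option.elim o 0 w) ∈ Iidg g := by
            refine Ideal.subset_span ⟨_, ?_, rfl⟩
            have := hlift w hw
            rw [h0, neg_zero] at this
            exact this
          exact Ideal.mul_mem_left _ _ hmem
        · have hident := iotaG_lift w (lam w) hne0
          have hmem : iotaG (fun o : Option κ => Option.elim o (-(lam w)) w) ∈ Iidg g :=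
            Ideal.subset_span ⟨_, hlift w hw, rfl⟩
          rw [hident] at hmem
          exact hmem
      -- representation of qD as combination of generators
      rcases Submodule.mem_span_set.mp hqDmem with ⟨c, hcs, hcsum⟩
      have hchoice : ∀ s ∈ c.support, ∃ w : κ → K, w ∈ Wset g' ∧ iotaG w = s := by
        intro s hs
        rcases hcs hs with ⟨w, hw, hws⟩
        exact ⟨w, hw, hws⟩
      choose wfun hwW hwio using hchoice
      set ee : MvPolynomial κ K :=
        ∑ s ∈ c.support.attach,
          c s.1 * (C (lam (wfun s.1 s.2)) * ∏ j ∈ gsupp (wfun s.1 s.2), X j) with hee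
      have hqDsum : qD = ∑ s ∈ c.support.attach, c s.1 * s.1 := by
        rw [← hcsum, Finsupp.sum, ← Finset.sum_attach c.support (fun s => c s • s)]
        rfl
      have hstepmem : X none * rename (some : κ → Option κ) qD
          - rename (some : κ → Option κ) ee ∈ Iidg g := by
        rw [hqDsum, hee, map_sum, map_sum, Finset.mul_sum, ← Finset.sum_sub_distrib]
        refine Ideal.sum_mem _ ?_
        intro s _
        rw [map_mul, map_mul, map_mul, rename_C]
        have hprod_ren : rename (some : κ → Option κ) (∏ j ∈ gsupp (wfun s.1 s.2), (X j : MvPolynomial κ K))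
            = ∏ j ∈ gsupp (wfun s.1 s.2), (X (some j) : MvPolynomial (Option κ) K) := by
          rw [map_prod]
          simp [rename_X]
        rw [hprod_ren]
        have hk := hkey _ (hwW s.1 s.2)
        rw [hwio s.1 s.2] at hk
        have hfact : X none * (rename (some : κ → Option κ) (c s.1)
              * rename (some : κ → Option κ) s.1)
            - rename (some : κ → Option κ) (c s.1) * (C (lam (wfun s.1 s.2))
              * ∏ j ∈ gsupp (wfun s.1 s.2), X (some j))
            = rename (some : κ → Option κ) (c s.1)
              * (X none * rename (some : κ → Option κ) s.1
                - C (lam (wfun s.1 s.2)) * ∏ j ∈ gsupp (wfun s.1 s.2), X (some j)) := by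
          ring
        rw [hfact]
        exact Ideal.mul_mem_left _ _ hk
      set ft := f - rename (some : κ → Option κ) qD * X none ^ (D+1)
          + rename (some : κ → Option κ) ee * X none ^ D with hft
      have hdiff : f - ft ∈ Iidg g := by
        have hdeq : f - ft = (X none * rename (some : κ → Option κ) qD
            - rename (some : κ → Option κ) ee) * X none ^ D := by
          rw [hft, pow_succ]
          ring
        rw [hdeq]
        exact Ideal.mul_mem_right _ _ hstepmem
      have hphift : phig g ft = 0 := by
        have h1 : phig g (f - ft) = 0 := Iidg_phig_eq_zero hg hdiff
        rw [map_sub, hf, zero_sub, neg_eq_zero] at h1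
        exact h1
      have hdeg : (optionEquivLeft K κ ft).natDegree ≤ D := by
        rw [Polynomial.natDegree_le_iff_coeff_eq_zero]
        intro N hN
        rw [hft, map_add, map_sub, map_mul, map_mul, map_pow, map_pow,
          optionEquivLeft_X_none, optionEquivLeft_rename_some, optionEquivLeft_rename_some]
        rw [Polynomial.coeff_add, Polynomial.coeff_sub, Polynomial.coeff_C_mul_X_pow,
          Polynomial.coeff_C_mul_X_pow]
        rcases eq_or_ne N (D+1) with rfl | hne
        · rw [if_pos rfl, if_neg (by omega)]
          have hcoe : ((optionEquivLeft K κ) f).coeff (D+1) = qD := rfl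
          rw [hcoe]
          simp
        · rw [if_neg hne, if_neg (by omega)]
          have hcoe : p.coeff N = 0 :=
            Polynomial.coeff_eq_zero_of_natDegree_lt (lt_of_le_of_lt hD (by omega))
          rw [show ((optionEquivLeft K κ) f).coeff N = p.coeff N from rfl, hcoe]
          simp
      have hftmem := IHD ft hdeg hphift
      have hsplit : f = ft + (f - ft) := by ring
      rw [hsplit]
      exact Ideal.add_mem _ hftmem hdiff





theorem OTker (N : ℕ) : ∀ (ι : Type) [Fintype ι] [DecidableEq ι], Fintype.card ι = N →
    ∀ (g : ι → σ → K), (∀ i, g i ≠ 0) →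
      ∀ f, phig g f = 0 → f ∈ Iidg g := by
  induction N with
  | zero =>
    intro ι _ _ hcard g hg f hf
    have hempty : IsEmpty ι := Fintype.card_eq_zero_iff.mp hcard
    obtain ⟨a, rfl⟩ := MvPolynomial.C_surjective ι f
    have : phig g (C a : MvPolynomial ι K) = algebraMap K (FF K σ) a := by
      rw [phig, aeval_C]
    rw [this] at hf
    have ha : a = 0 := by
      have := (algebraMap K (FF K σ)).injective
      exact this (by rw [hf, map_zero])
    rw [ha, map_zero]
    exact Ideal.zero_mem _
  | succ N IHN =>
    intro ι _ _ hcard g hg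
    have e : ι ≃ Option (Fin N) := (Fintype.equivFinOfCardEq hcard).trans (_root_.finSuccEquiv N)
    refine OT_transport e.symm g ?_
    intro q hq
    refine OTstep (fun g'' hg'' => ?_) (fun o => g (e.symm o)) (fun o => hg _) q hq
    exact IHN (Fin N) (by simp) g'' hg''

end OTMain


end OTAux


section Application

variable {n : ℕ}

lemma lsupp_eq_gsupp (a : Fin n → K) : lsupp a = gsupp a := rfl

lemma iotaL_eq_iotaG (a : Fin n → K) : iotaL a = iotaG a := rfl

/-- The relation space as a submodule. -/
def relSub {V : Type*} [AddCommGroup V] [Module K V] (α : Fin n → Module.Dual K V) :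
    Submodule K (Fin n → K) where
  carrier := {a | ∑ i, a i • α i = 0}
  add_mem' := by
    intro a b ha hb
    have ha' : ∑ i, a i • α i = 0 := ha
    have hb' : ∑ i, b i • α i = 0 := hb
    show ∑ i, (a + b) i • α i = 0
    have : ∀ i, (a + b) i • α i = a i • α i + b i • α i := by
      intro i
      rw [Pi.add_apply, add_smul]
    rw [Finset.sum_congr rfl (fun i _ => this i), Finset.sum_add_distrib, ha', hb', add_zero]
  zero_mem' := by
    show ∑ i, (0 : Fin n → K) i • α i = 0
    simp
  smul_mem' := by
    intro c a ha
    have ha' : ∑ i, a i • α i = 0 := ha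
    show ∑ i, (c • a) i • α i = 0
    have : ∀ i, (c • a) i • α i = c • (a i • α i) := by
      intro i
      rw [Pi.smul_apply, smul_eq_mul, ← smul_smul]
    rw [Finset.sum_congr rfl (fun i _ => this i), ← Finset.smul_sum, ha', smul_zero]

/-- The submodule of vectors vanishing on `Γ`. -/
def vanSub (Γ : Finset (Fin n)) : Submodule K (Fin n → K) where
  carrier := {a | ∀ i ∈ Γ, a i = 0}
  add_mem' := by
    intro a b ha hb i hi
    rw [Pi.add_apply, ha i hi, hb i hi, add_zero]
  zero_mem' := by
    intro i _
    rfl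
  smul_mem' := by
    intro c a ha i hi
    rw [Pi.smul_apply, ha i hi, smul_zero]

lemma Qid_eq_ker {V : Type*} [AddCommGroup V] [Module K V]
    (α : Fin n → Module.Dual K V) (hne : ∀ i, α i ≠ 0)
    (R : Set (Fin n → K)) (hR : ∀ r ∈ R, IsRel α r) (Γ : Finset (Fin n)) :
    ∃ (m : ℕ) (Φ : MvPolynomial (Fin n) K →ₐ[K] FF K (Fin m)),
      Qid R Γ = RingHom.ker Φ ∧ ∀ j, j ∉ Γ → Φ (X j) ≠ 0 := by
  classical
  set W : Submodule K (Fin n → K) := Submodule.span K (R0 R Γ) with hW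
  have hWrel : W ≤ relSub α := by
    rw [hW, Submodule.span_le]
    intro r hr
    exact hR r hr.1
  have hWvan : W ≤ vanSub Γ := by
    rw [hW, Submodule.span_le]
    intro r hr i hiΓ
    by_contra hri
    have hmem : i ∈ Γ ∩ lsupp r := Finset.mem_inter.mpr ⟨hiΓ, mem_gsupp.mpr hri⟩
    rw [hr.2] at hmem
    exact Finset.notMem_empty i hmem
  set Qm := (Fin n → K) ⧸ W with hQm
  set m := Module.finrank K Qm with hm
  set b := Module.finBasis K Qm with hb
  set gmap : (Fin n → K) →ₗ[K] (Fin m → K) :=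
    Finsupp.lcoeFun.comp (b.repr.toLinearMap.comp W.mkQ) with hgmap
  set g : Fin n → (Fin m → K) := fun i => gmap (Pi.single i 1) with hg
  have hgsum : ∀ a : Fin n → K, ∑ i, a i • g i = gmap a := by
    intro a
    have h1 : ∀ i : Fin n, a i • g i = gmap (Pi.single i (a i)) := by
      intro i
      rw [hg, ← map_smul]
      congr 1
      rw [← Pi.single_smul, smul_eq_mul, mul_one]
    rw [Finset.sum_congr rfl (fun i _ => h1 i), ← map_sum]
    congr 1
    exact Finset.univ_sum_single a
  have hker_g : ∀ a : Fin n → K, gmap a = 0 ↔ a ∈ W := by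
    intro a
    constructor
    · intro h
      have h1 : (b.repr (W.mkQ a) : Fin m → K) = 0 := h
      have h2 : b.repr (W.mkQ a) = 0 := by
        ext t
        exact congrFun h1 t
      have h3 : W.mkQ a = 0 := by
        apply b.repr.injective
        rw [map_zero]
        exact h2
      rwa [Submodule.mkQ_apply, Submodule.Quotient.mk_eq_zero] at h3
    · intro h
      have h3 : W.mkQ a = 0 := by
        rw [Submodule.mkQ_apply, Submodule.Quotient.mk_eq_zero]
        exact h
      show gmap a = 0
      rw [hgmap]
      simp [h3]
  have hgne : ∀ j, j ∉ Γ → g j ≠ 0 := by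
    intro j hj h0
    have hmem : (Pi.single j 1 : Fin n → K) ∈ W := (hker_g _).mp h0
    have hrel : ∑ i, (Pi.single j 1 : Fin n → K) i • α i = 0 := hWrel hmem
    have hsum : ∑ i, (Pi.single j 1 : Fin n → K) i • α i = α j := by
      rw [Finset.sum_eq_single j]
      · rw [Pi.single_eq_same, one_smul]
      · intro i _ hij
        have h0 : (Pi.single j 1 : Fin n → K) i = 0 := Pi.single_eq_of_ne hij 1
        rw [h0, zero_smul]
      · intro h
        exact absurd (Finset.mem_univ j) h
    rw [hsum] at hrel
    exact hne j hrel
  set Φv : Fin n → FF K (Fin m) := fun i => if i ∈ Γ then 0 else (uu (g i))⁻¹ with hΦv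
  refine ⟨m, aeval Φv, ?_, ?_⟩
  · apply le_antisymm
    · -- Qid ≤ ker
      rw [Qid]
      apply sup_le
      · rw [Ideal.span_le]
        rintro s ⟨i, hi, rfl⟩
        rw [Finset.mem_coe] at hi
        rw [SetLike.mem_coe, RingHom.mem_ker]
        rw [aeval_X]
        rw [hΦv]
        simp only [if_pos hi]
      · rw [Iid, Ideal.span_le]
        rintro s ⟨w, hw, rfl⟩
        rw [SetLike.mem_coe, RingHom.mem_ker, iotaL_eq_iotaG]
        have hwW : w ∈ W := hw
        refine aeval_iotaG_eq_zero Φv g w ?_ ?_ ?_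
        · intro i hi
          have hiΓ : i ∉ Γ := by
            intro hiΓ
            exact mem_gsupp.mp hi (hWvan hwW i hiΓ)
          rw [hΦv]
          simp only [if_neg hiΓ]
        · intro i hi
          refine hgne i ?_
          intro hiΓ
          exact mem_gsupp.mp hi (hWvan hwW i hiΓ)
        · rw [Finset.sum_subset (Finset.subset_univ (gsupp w)) ?_]
          · rw [hgsum]
            exact (hker_g w).mpr hwW
          · intro i _ hig
            rw [mem_gsupp, not_not] at hig
            rw [hig, zero_smul]
    · -- ker ≤ Qid
      intro f hf
      rw [RingHom.mem_ker] at hf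
      set kv : Fin n → MvPolynomial (Fin n) K := fun i => if i ∈ Γ then 0 else X i with hkv
      have hsub := sub_aeval_mem kv f
      have hspan1 : Ideal.span (Set.range fun i => (X i : MvPolynomial (Fin n) K) - kv i)
          ≤ Qid R Γ := by
        rw [Ideal.span_le]
        rintro s ⟨i, rfl⟩
        show (X i : MvPolynomial (Fin n) K) - kv i ∈ Qid R Γ
        by_cases hiΓ : i ∈ Γ
        · have : (X i : MvPolynomial (Fin n) K) - kv i = X i := by
            rw [hkv]
            simp only [if_pos hiΓ, sub_zero]
          rw [this]
          exact Submodule.mem_sup_left (Ideal.subset_span ⟨i, hiΓ, rfl⟩)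
        · have : (X i : MvPolynomial (Fin n) K) - kv i = 0 := by
            rw [hkv]
            simp only [if_neg hiΓ, sub_self]
          rw [this]
          exact Ideal.zero_mem _
      have hfsub : f - aeval kv f ∈ Qid R Γ := hspan1 hsub
      have hphif0 : aeval Φv (aeval kv f) = 0 := by
        have hcomp : (aeval Φv : MvPolynomial (Fin n) K →ₐ[K] FF K (Fin m)).comp (aeval kv)
            = (aeval Φv : MvPolynomial (Fin n) K →ₐ[K] FF K (Fin m)) := by
          apply MvPolynomial.algHom_ext
          intro i
          rw [AlgHom.comp_apply, aeval_X, aeval_X]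
          by_cases hiΓ : i ∈ Γ
          · rw [hkv]
            simp only [if_pos hiΓ, map_zero]
            rw [hΦv]
            simp only [if_pos hiΓ]
          · rw [hkv]
            simp only [if_neg hiΓ]
            rw [aeval_X]
        calc aeval Φv (aeval kv f)
            = ((aeval Φv : MvPolynomial (Fin n) K →ₐ[K] FF K (Fin m)).comp (aeval kv)) f := rfl
          _ = aeval Φv f := by rw [hcomp]
          _ = 0 := hf
      set ιC := {i : Fin n // i ∉ Γ} with hιC
      set sv : Fin n → MvPolynomial ιC K :=
        fun i => if h : i ∈ Γ then 0 else X (⟨i, h⟩ : ιC) with hsv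
      set q0 : MvPolynomial ιC K := aeval sv f with hq0
      have hren : aeval kv f = rename (Subtype.val : ιC → Fin n) q0 := by
        have hcomp : (rename (Subtype.val : ιC → Fin n)).comp
            (aeval sv : MvPolynomial (Fin n) K →ₐ[K] MvPolynomial ιC K)
            = (aeval kv : MvPolynomial (Fin n) K →ₐ[K] MvPolynomial (Fin n) K) := by
          apply MvPolynomial.algHom_ext
          intro i
          rw [AlgHom.comp_apply, aeval_X, aeval_X]
          by_cases hiΓ : i ∈ Γ
          · rw [hsv, hkv]
            simp only [dif_pos hiΓ, if_pos hiΓ, map_zero]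
          · rw [hsv, hkv]
            simp only [dif_neg hiΓ, if_neg hiΓ, rename_X]
        calc aeval kv f = ((rename (Subtype.val : ιC → Fin n)).comp
              (aeval sv : MvPolynomial (Fin n) K →ₐ[K] MvPolynomial ιC K)) f := by rw [hcomp]
          _ = rename (Subtype.val : ιC → Fin n) q0 := rfl
      set gC : ιC → Fin m → K := fun j => g j.1 with hgC
      have hgCne : ∀ j : ιC, gC j ≠ 0 := fun j => hgne j.1 j.2
      have hphiq0 : phig gC q0 = 0 := by
        have hcomp : aeval Φv (rename (Subtype.val : ιC → Fin n) q0) = phig gC q0 := by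
          have hvec : (Φv ∘ (Subtype.val : ιC → Fin n)) = fun j : ιC => (uu (gC j))⁻¹ := by
            funext j
            show Φv j.1 = (uu (gC j))⁻¹
            rw [hΦv]
            simp only [if_neg j.2]
            rfl
          rw [phig, aeval_rename, hvec]
        rw [← hcomp, ← hren]
        exact hphif0
      have hq0mem : q0 ∈ Iidg gC :=
        OTker (Fintype.card ιC) ιC rfl gC hgCne q0 hphiq0
      have hmap := Ideal.mem_map_of_mem (rename (Subtype.val : ιC → Fin n)) hq0mem
      rw [Iidg, Ideal.map_span] at hmap
      have hf0mem : aeval kv f ∈ Qid R Γ := by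
        rw [hren]
        refine Ideal.span_le.mpr ?_ hmap
        rintro s ⟨t, ⟨w, hw, rfl⟩, rfl⟩
        set w' : Fin n → K := fun i => if h : i ∈ Γ then 0 else w ⟨i, h⟩ with hw'
        have hio : rename (Subtype.val : ιC → Fin n) (iotaG w) = iotaG w' := by
          refine rename_iotaG _ Subtype.val_injective w w' ?_ ?_
          · intro j
            rw [hw']
            simp only [dif_neg j.2]
          · intro i hni
            have hiΓ : i ∈ Γ := by
              by_contra hiΓ
              exact hni ⟨i, hiΓ⟩ rfl
            rw [hw']
            simp only [dif_pos hiΓ]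
        rw [hio]
        have hw'W : w' ∈ W := by
          rw [← hker_g, ← hgsum]
          have hsplit : ∑ i, w' i • g i = ∑ j : ιC, w' j.1 • g j.1 := by
            rw [← Finset.sum_subtype (Finset.univ.filter (fun i => i ∉ Γ))
              (fun i => by simp) (fun i => w' i • g i)]
            refine (Finset.sum_subset (Finset.filter_subset _ _) ?_).symm
            intro i _ hif
            have hiΓ : i ∈ Γ := by
              by_contra hiΓ
              exact hif (Finset.mem_filter.mpr ⟨Finset.mem_univ i, hiΓ⟩)
            rw [hw']
            simp only [dif_pos hiΓ, zero_smul]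
          rw [hsplit]
          have hterm : ∀ j : ιC, w' j.1 • g j.1 = w j • gC j := by
            intro j
            rw [hw']
            simp only [dif_neg j.2]
            rfl
          rw [Finset.sum_congr rfl (fun j _ => hterm j)]
          exact hw
        refine Submodule.mem_sup_right (Ideal.subset_span ⟨w', hw'W, ?_⟩)
        rw [iotaL_eq_iotaG]
      have hfinal : f = (f - aeval kv f) + aeval kv f := by ring
      rw [hfinal]
      exact Ideal.add_mem _ hfsub hf0mem
  · -- nonvanishing on variables off Γ
    intro j hj
    rw [aeval_X, hΦv]
    simp only [if_neg hj]
    exact inv_ne_zero (uu_ne_zero (hgne j hj))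

lemma Qid_isPrime {V : Type*} [AddCommGroup V] [Module K V]
    (α : Fin n → Module.Dual K V) (hne : ∀ i, α i ≠ 0)
    (R : Set (Fin n → K)) (hR : ∀ r ∈ R, IsRel α r) (Γ : Finset (Fin n)) :
    (Qid R Γ).IsPrime := by
  obtain ⟨m, Φ, hker, -⟩ := Qid_eq_ker α hne R hR Γ
  rw [hker]
  exact RingHom.ker_isPrime Φ

lemma X_not_mem_Qid {V : Type*} [AddCommGroup V] [Module K V]
    (α : Fin n → Module.Dual K V) (hne : ∀ i, α i ≠ 0)
    (R : Set (Fin n → K)) (hR : ∀ r ∈ R, IsRel α r) (Γ : Finset (Fin n))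
    {j : Fin n} (hj : j ∉ Γ) : (X j : MvPolynomial (Fin n) K) ∉ Qid R Γ := by
  obtain ⟨m, Φ, hker, hX⟩ := Qid_eq_ker α hne R hR Γ
  rw [hker]
  intro hmem
  exact hX j hj (RingHom.mem_ker.mp hmem)

lemma Jid_le_Qid (R : Set (Fin n → K)) (Γ : Finset (Fin n)) (hΓ : IsCover R Γ) :
    Jid R ≤ Qid R Γ := by
  rw [Jid, Ideal.span_le]
  rintro s ⟨r, hr, rfl⟩
  rw [SetLike.mem_coe]
  by_cases hint : Γ ∩ lsupp r = ∅
  · exact Submodule.mem_sup_right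
      (Ideal.subset_span ⟨r, Submodule.subset_span ⟨hr, hint⟩, rfl⟩)
  · have h0 : (Γ ∩ lsupp r).card ≠ 0 := by
      simpa [Finset.card_eq_zero] using hint
    have hcard : 1 < (Γ ∩ lsupp r).card := by
      have := hΓ r hr
      omega
    apply Submodule.mem_sup_left
    rw [iotaL]
    refine Ideal.sum_mem _ ?_
    intro i _
    obtain ⟨γ, hγmem, hγne⟩ : ∃ γ ∈ Γ ∩ lsupp r, γ ≠ i := by
      obtain ⟨a, ha, b, hb, hab⟩ := Finset.one_lt_card.mp hcard
      rcases eq_or_ne a i with rfl | h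
      · exact ⟨b, hb, fun hbi => hab hbi.symm⟩
      · exact ⟨a, ha, h⟩
    have hγΓ : γ ∈ Γ := (Finset.mem_inter.mp hγmem).1
    have hγs : γ ∈ (lsupp r).erase i :=
      Finset.mem_erase.mpr ⟨hγne, (Finset.mem_inter.mp hγmem).2⟩
    have hprod : ∏ j ∈ (lsupp r).erase i, (X j : MvPolynomial (Fin n) K)
        = X γ * ∏ j ∈ ((lsupp r).erase i).erase γ, X j :=
      (Finset.mul_prod_erase _ _ hγs).symm
    rw [hprod]
    have hXγ : (X γ : MvPolynomial (Fin n) K)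
        ∈ Ideal.span ((fun i => (X i : MvPolynomial (Fin n) K)) '' ↑Γ) :=
      Ideal.subset_span ⟨γ, hγΓ, rfl⟩
    have heq : C (r i) * (X γ * ∏ j ∈ ((lsupp r).erase i).erase γ, (X j : MvPolynomial (Fin n) K))
        = (C (r i) * ∏ j ∈ ((lsupp r).erase i).erase γ, (X j : MvPolynomial (Fin n) K)) * X γ := by
      ring
    rw [heq]
    exact Ideal.mul_mem_left _ _ hXγ

end Application



/-- Proposition 4.4 ((i) ⟺ (ii)): for `ℜ ⊆ F(𝒜)` and `Γ ∈ co(ℜ)`, the ideal `Q_Γ(ℜ)` is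
a minimal prime of `J(ℜ)` if and only if `Q_{Γ'}(ℜ) ⊄ Q_Γ(ℜ)` for every `ℜ`-cover `Γ'`
with `Γ' ⊊ Γ`. -/
theorem Qid_minimal_prime_iff
    {V : Type*} [AddCommGroup V] [Module K V] [FiniteDimensional K V]
    (α : Fin n → Module.Dual K V) (hne : ∀ i, α i ≠ 0)
    (hdist : ∀ i j, i ≠ j → LinearMap.ker (α i) ≠ LinearMap.ker (α j))
    (R : Set (Fin n → K)) (hR : ∀ r ∈ R, IsRel α r)
    (Γ : Finset (Fin n)) (hΓ : IsCover R Γ) :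
    Qid R Γ ∈ (Jid R).minimalPrimes ↔
      ∀ Γ' : Finset (Fin n), IsCover R Γ' → Γ' ⊂ Γ → ¬ Qid R Γ' < Qid R Γ := by
  constructor
  · -- (i) → (ii)
    intro hmin Γ' hΓ'cov hss hlt
    have hprime' : (Qid R Γ').IsPrime := Qid_isPrime α hne R hR Γ'
    have hJle' : Jid R ≤ Qid R Γ' := Jid_le_Qid R Γ' hΓ'cov
    exact hlt.not_ge (hmin.2 ⟨hprime', hJle'⟩ hlt.le)
  · -- (ii) → (i)
    intro H
    refine ⟨⟨Qid_isPrime α hne R hR Γ, Jid_le_Qid R Γ hΓ⟩, ?_⟩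
    intro q hq hle
    classical
    have hqprime : q.IsPrime := hq.1
    have hJq : Jid R ≤ q := hq.2
    set Γ'' : Finset (Fin n) :=
      Finset.univ.filter (fun i => (X i : MvPolynomial (Fin n) K) ∈ q) with hΓ''
    have hXmem : ∀ i : Fin n, i ∈ Γ'' ↔ (X i : MvPolynomial (Fin n) K) ∈ q := by
      intro i
      rw [hΓ'']
      simp
    have hsub : Γ'' ⊆ Γ := by
      intro i hi
      by_contra hiΓ
      exact X_not_mem_Qid α hne R hR Γ hiΓ (hle ((hXmem i).mp hi))
    have hcov'' : IsCover R Γ'' := by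
      intro r hr hcard1
      rw [Finset.card_eq_one] at hcard1
      obtain ⟨i, hi⟩ := hcard1
      have hii : i ∈ Γ'' ∩ lsupp r := by
        rw [hi]
        exact Finset.mem_singleton_self i
      have hiΓ'' : i ∈ Γ'' := (Finset.mem_inter.mp hii).1
      have hils : i ∈ lsupp r := (Finset.mem_inter.mp hii).2
      have hio : iotaL r ∈ q := hJq (Ideal.subset_span ⟨r, hr, rfl⟩)
      have hterm : ∀ i' ∈ lsupp r, i' ≠ i →
          C (r i') * ∏ j ∈ (lsupp r).erase i', (X j : MvPolynomial (Fin n) K) ∈ q := by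
        intro i' _ hne'
        have himem : i ∈ (lsupp r).erase i' := Finset.mem_erase.mpr ⟨fun h => hne' h.symm, hils⟩
        have hprod : ∏ j ∈ (lsupp r).erase i', (X j : MvPolynomial (Fin n) K)
            = X i * ∏ j ∈ ((lsupp r).erase i').erase i, X j :=
          (Finset.mul_prod_erase _ _ himem).symm
        rw [hprod]
        have heq : C (r i') * ((X i : MvPolynomial (Fin n) K)
              * ∏ j ∈ ((lsupp r).erase i').erase i, X j)
            = (C (r i') * ∏ j ∈ ((lsupp r).erase i').erase i, (X j : MvPolynomial (Fin n) K))
              * X i := by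
          ring
        rw [heq]
        exact Ideal.mul_mem_left _ _ ((hXmem i).mp hiΓ'')
      have hmain : C (r i) * ∏ j ∈ (lsupp r).erase i, (X j : MvPolynomial (Fin n) K) ∈ q := by
        have hsplit : iotaL r = C (r i) * ∏ j ∈ (lsupp r).erase i, (X j : MvPolynomial (Fin n) K)
            + ∑ i' ∈ (lsupp r).erase i, C (r i') * ∏ j ∈ (lsupp r).erase i', X j := by
          rw [iotaL]
          exact (Finset.add_sum_erase (lsupp r)
            (fun i' => C (r i') * ∏ j ∈ (lsupp r).erase i', (X j : MvPolynomial (Fin n) K))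
            hils).symm
        have hsum : ∑ i' ∈ (lsupp r).erase i,
            C (r i') * ∏ j ∈ (lsupp r).erase i', (X j : MvPolynomial (Fin n) K) ∈ q := by
          refine Ideal.sum_mem _ ?_
          intro i' hi'
          exact hterm i' (Finset.mem_of_mem_erase hi') (Finset.mem_erase.mp hi').1
        have := Ideal.sub_mem _ hio hsum
        rwa [hsplit, add_sub_cancel_right] at this
      have hXprod : ∏ j ∈ (lsupp r).erase i, (X j : MvPolynomial (Fin n) K) ∈ q := by
        have hCC : (C ((r i)⁻¹) : MvPolynomial (Fin n) K)
            * (C (r i) * ∏ j ∈ (lsupp r).erase i, X j)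
            = ∏ j ∈ (lsupp r).erase i, (X j : MvPolynomial (Fin n) K) := by
          rw [← mul_assoc, ← MvPolynomial.C_mul, inv_mul_cancel₀ (mem_gsupp.mp hils),
            MvPolynomial.C_1, one_mul]
        rw [← hCC]
        exact Ideal.mul_mem_left _ _ hmain
      have hone : (1 : MvPolynomial (Fin n) K) ∈ q := by
        refine prod_X_mul_mem hqprime (by rwa [mul_one]) ?_
        intro j hj
        intro hXj
        have hjΓ'' : j ∈ Γ'' := (hXmem j).mpr hXj
        have hjmem : j ∈ Γ'' ∩ lsupp r :=
          Finset.mem_inter.mpr ⟨hjΓ'', Finset.mem_of_mem_erase hj⟩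
        rw [hi] at hjmem
        exact (Finset.mem_erase.mp hj).1 (Finset.mem_singleton.mp hjmem)
      exact hqprime.ne_top ((Ideal.eq_top_iff_one q).mpr hone)
    have hQ'' : Qid R Γ'' ≤ q := by
      rw [Qid]
      apply sup_le
      · rw [Ideal.span_le]
        rintro s ⟨i, hi, rfl⟩
        rw [Finset.mem_coe] at hi
        exact (hXmem i).mp hi
      · rw [Iid, Ideal.span_le]
        rintro s ⟨a, ha, rfl⟩
        rw [SetLike.mem_coe, iotaL_eq_iotaG]
        refine iotaG_mem_of_span hqprime (T := R0 R Γ'') ?_ ?_ a ha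
        · intro r hr
          rw [← iotaL_eq_iotaG]
          exact hJq (Ideal.subset_span ⟨r, hr.1, rfl⟩)
        · intro r hr i hri hXi
          have hiΓ'' : i ∈ Γ'' := (hXmem i).mpr hXi
          have hmem2 : i ∈ Γ'' ∩ lsupp r := Finset.mem_inter.mpr ⟨hiΓ'', mem_gsupp.mpr hri⟩
          rw [hr.2] at hmem2
          exact Finset.notMem_empty i hmem2
    rcases eq_or_ne Γ'' Γ with heq | hnee
    · rw [heq] at hQ''
      exact hQ''
    · have hssub : Γ'' ⊂ Γ := ssubset_of_subset_of_ne hsub hnee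
      have hnotlt := H Γ'' hcov'' hssub
      have hle'' : Qid R Γ'' ≤ Qid R Γ := le_trans hQ'' hle
      have heqQ : Qid R Γ'' = Qid R Γ := by
        by_contra hneQ
        exact hnotlt (lt_of_le_of_ne hle'' hneQ)
      rw [← heqQ]
      exact hQ''


end
end

section
/- Let ℜ be a finite subset of F(𝒜) such that |supp(r) ∩ supp(r')| ≤ 1 for all distinct r, r' ∈ ℜ. Then ℜ is simple if and only if the intersection graph 𝒢(ℜ) is quasi-acyclic (i.e., contains no proper cycle). -/
open MvPolynomial

noncomputable section

variable {K : Type*} [Field K] {n : ℕ}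

/-- `ℜ` is simple: its elements admit an enumeration `r₁, …, r_m` such that
`|supp(rᵢ) ∩ (supp(r₁) ∪ ⋯ ∪ supp(r_{i-1}))| ≤ 1` for `i = 2, …, m`. -/
def SimpleRelSet (R : Finset (Fin n → K)) : Prop :=
  ∃ (m : ℕ) (e : Fin m → (Fin n → K)), Function.Injective e ∧
    Set.range e = (R : Set (Fin n → K)) ∧
    ∀ i : Fin m, (lsupp (e i) ∩ (Finset.Iio i).biUnion (fun j => lsupp (e j))).card ≤ 1

/-- The intersection graph `𝒢(ℜ)` on vertex set `ℜ` (vertices `r ≠ r'` adjacent iff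
`supp(r) ∩ supp(r') ≠ ∅`, the edge `{r,r'}` being labeled by `supp(r) ∩ supp(r')`)
contains a proper cycle: a cycle `v₀, v₁, …, v_{k-1}, v₀` (with `k ≥ 3` distinct vertices,
consecutive ones adjacent) whose edge labels are pairwise distinct. -/
def HasProperCycle (R : Finset (Fin n → K)) : Prop :=
  ∃ (k : ℕ) (v : Fin (k + 3) → (Fin n → K)),
    Function.Injective v ∧ (∀ i, v i ∈ R) ∧
    (∀ i, (lsupp (v i) ∩ lsupp (v (i + 1))).Nonempty) ∧
    Function.Injective (fun i => lsupp (v i) ∩ lsupp (v (i + 1)))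

lemma cycle_of_segment (R : Finset (Fin n → K)) (p : ℕ → (Fin n → K)) (a b : ℕ) (i : Fin n)
    (hab : a + 2 ≤ b)
    (hmem : ∀ x, a ≤ x → x ≤ b → p x ∈ R)
    (hinj : ∀ x y, a ≤ x → x ≤ b → a ≤ y → y ≤ b → p x = p y → x = y)
    (hadj : ∀ x, a ≤ x → x < b → (lsupp (p x) ∩ lsupp (p (x+1))).Nonempty)
    (hlabinj : ∀ x y, a ≤ x → x < b → a ≤ y → y < b →
      lsupp (p x) ∩ lsupp (p (x+1)) = lsupp (p y) ∩ lsupp (p (y+1)) → x = y)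
    (hia : i ∈ lsupp (p a)) (hib : i ∈ lsupp (p b))
    (hinew : ∀ x, a ≤ x → x < b → i ∉ lsupp (p x) ∩ lsupp (p (x+1))) :
    HasProperCycle R := by
  set k := b - a - 2 with hk
  have hkb : a + (k + 2) = b := by omega
  set v : Fin (k+3) → (Fin n → K) := fun j => p (a + j.val) with hv
  have hdesc : ∀ j : Fin (k+3),
      (a + j.val < b ∧ lsupp (v j) ∩ lsupp (v (j+1)) =
        lsupp (p (a + j.val)) ∩ lsupp (p (a + j.val + 1)))
      ∨ (a + j.val = b ∧ lsupp (v j) ∩ lsupp (v (j+1)) = lsupp (p b) ∩ lsupp (p a)) := by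
    intro j
    have hjlt := j.is_lt
    rcases Nat.lt_or_ge j.val (k+2) with hj | hj
    · left
      refine ⟨by omega, ?_⟩
      have h1 : ((j + 1 : Fin (k+3))).val = j.val + 1 :=
        Fin.val_add_one_of_lt (by rw [Fin.lt_def]; simpa using hj)
      simp only [hv, h1]
      rw [Nat.add_assoc]
    · have hj' : j = Fin.last (k+2) := Fin.ext (by simp; omega)
      right
      refine ⟨by omega, ?_⟩
      have h1 : ((j + 1 : Fin (k+3))).val = 0 := by rw [hj', Fin.last_add_one]; rfl
      have h2 : j.val = k + 2 := by omega
      simp only [hv, h1, h2, Nat.add_zero, hkb]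
  refine ⟨k, v, ?_, ?_, ?_, ?_⟩
  · intro j1 j2 h
    have h1 := j1.is_lt; have h2 := j2.is_lt
    have := hinj (a + j1.val) (a + j2.val) (by omega) (by omega) (by omega) (by omega) h
    exact Fin.ext (by omega)
  · intro j
    have := j.is_lt
    exact hmem _ (by omega) (by omega)
  · intro j
    rcases hdesc j with ⟨h1, h2⟩ | ⟨h1, h2⟩
    · rw [h2]; exact hadj (a + j.val) (by omega) h1
    · rw [h2]; exact ⟨i, Finset.mem_inter.mpr ⟨hib, hia⟩⟩
  · intro j1 j2 heq
    simp only at heq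
    have hC : i ∈ lsupp (p b) ∩ lsupp (p a) := Finset.mem_inter.mpr ⟨hib, hia⟩
    have h1 := j1.is_lt; have h2 := j2.is_lt
    rcases hdesc j1 with ⟨hb1, hl1⟩ | ⟨hb1, hl1⟩ <;> rcases hdesc j2 with ⟨hb2, hl2⟩ | ⟨hb2, hl2⟩
    · rw [hl1, hl2] at heq
      have := hlabinj (a + j1.val) (a + j2.val) (by omega) hb1 (by omega) hb2 heq
      exact Fin.ext (by omega)
    · rw [hl1, hl2] at heq
      exact absurd (heq ▸ hC) (hinew (a + j1.val) (by omega) hb1)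
    · rw [hl1, hl2] at heq
      exact absurd (heq ▸ hC) (hinew (a + j2.val) (by omega) hb2)
    · exact Fin.ext (by omega)


def GoodPath (R : Finset (Fin n → K)) (t : ℕ) (p : ℕ → (Fin n → K)) : Prop :=
  (∀ x, x ≤ t → p x ∈ R) ∧
  (∀ x y, x ≤ t → y ≤ t → p x = p y → x = y) ∧
  (∀ x, x < t → (lsupp (p x) ∩ lsupp (p (x+1))).Nonempty) ∧
  (∀ x y, x < t → y < t →
    lsupp (p x) ∩ lsupp (p (x+1)) = lsupp (p y) ∩ lsupp (p (y+1)) → x = y)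

lemma lsupp_singleton {s : Finset (Fin n)} (h : s.card ≤ 1) {i : Fin n} (hi : i ∈ s) :
    s = {i} :=
  Finset.eq_singleton_iff_unique_mem.mpr ⟨hi, fun y hy => Finset.card_le_one.mp h y hy i hi⟩

open Classical in
lemma exists_terminal (R : Finset (Fin n → K))
    (hpair : ∀ r ∈ R, ∀ r' ∈ R, r ≠ r' → (lsupp r ∩ lsupp r').card ≤ 1)
    (hnc : ¬ HasProperCycle R) (hne : R.Nonempty) :
    ∃ r ∈ R, (lsupp r ∩ (R.erase r).biUnion (fun s => lsupp s)).card ≤ 1 := by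
  classical
  by_contra hcon
  push_neg at hcon
  set P : ℕ → Prop := fun t => ∃ p, GoodPath R t p with hP
  have hbound : ∀ t, P t → t + 1 ≤ R.card := by
    rintro t ⟨p, hm, hi, -, -⟩
    have hsub : (Finset.range (t+1)).image p ⊆ R := by
      intro x hx
      obtain ⟨y, hy, rfl⟩ := Finset.mem_image.mp hx
      exact hm y (by simpa using Nat.lt_succ_iff.mp (Finset.mem_range.mp hy))
    calc t + 1 = ((Finset.range (t+1)).image p).card := by
          rw [Finset.card_image_of_injOn, Finset.card_range]
          intro x hx y hy h
          exact hi x y (Nat.lt_succ_iff.mp (by simpa using hx))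
            (Nat.lt_succ_iff.mp (by simpa using hy)) h
      _ ≤ R.card := Finset.card_le_card hsub
  -- initial path of length 1
  obtain ⟨r0, hr0⟩ := hne
  have h20 := hcon r0 hr0
  obtain ⟨i0, hi0⟩ := Finset.card_pos.mp (Nat.zero_lt_one.trans h20)
  have hi0l : i0 ∈ lsupp r0 := (Finset.mem_inter.mp hi0).1
  obtain ⟨r1, hr1e, hir1⟩ := Finset.mem_biUnion.mp (Finset.mem_inter.mp hi0).2
  have hr1R : r1 ∈ R := Finset.mem_of_mem_erase hr1e
  have hr1ne : r1 ≠ r0 := Finset.ne_of_mem_erase hr1e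
  have hP1 : P 1 := by
    refine ⟨fun x => if x = 0 then r0 else r1, ?_, ?_, ?_, ?_⟩
    · intro x _; dsimp only; split <;> assumption
    · intro x y hx hy h
      dsimp only at h
      split at h <;> split at h <;> first | omega | (exact absurd h.symm hr1ne) |
        (exact absurd h hr1ne)
    · intro x hx
      have : x = 0 := by omega
      subst this
      exact ⟨i0, by simpa using Finset.mem_inter.mpr ⟨hi0l, hir1⟩⟩
    · intro x y hx hy _; omega
  have hN2 : 2 ≤ R.card := hbound 1 hP1
  set t := Nat.findGreatest P R.card with htdef
  have ht : P t := Nat.findGreatest_spec (by omega : 1 ≤ R.card) hP1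
  have ht1 : 1 ≤ t := Nat.le_findGreatest (by omega) hP1
  have hmax : ∀ t', P t' → t' ≤ t := fun t' h =>
    Nat.le_findGreatest (by have := hbound t' h; omega) h
  obtain ⟨p, hm, hi, hadj, hlab⟩ := ht
  have hedge_card : ∀ x, x < t → (lsupp (p x) ∩ lsupp (p (x+1))).card ≤ 1 := by
    intro x hx
    refine hpair _ (hm x (by omega)) _ (hm (x+1) (by omega)) (fun h => ?_)
    have := hi x (x+1) (by omega) (by omega) h; omega
  obtain ⟨c, hc⟩ := hadj (t-1) (by omega)
  rw [show t - 1 + 1 = t by omega] at hc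
  have hS := hcon (p t) (hm t le_rfl)
  obtain ⟨i, hiS, hic⟩ := Finset.exists_mem_ne hS c
  have hit : i ∈ lsupp (p t) := (Finset.mem_inter.mp hiS).1
  obtain ⟨r', hr'e, hir'⟩ := Finset.mem_biUnion.mp (Finset.mem_inter.mp hiS).2
  have hr'R : r' ∈ R := Finset.mem_of_mem_erase hr'e
  have hr'ne : r' ≠ p t := Finset.ne_of_mem_erase hr'e
  have hnot1 : i ∉ lsupp (p (t-1)) := by
    intro hmem1
    have h2' : 1 < (lsupp (p (t-1)) ∩ lsupp (p t)).card :=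
      Finset.one_lt_card.mpr ⟨i, Finset.mem_inter.mpr ⟨hmem1, hit⟩, c, hc, hic⟩
    have := hedge_card (t-1) (by omega)
    rw [show t - 1 + 1 = t by omega] at this
    omega
  by_cases hcase : ∃ j, j < t ∧ i ∈ lsupp (p j) ∩ lsupp (p (j+1))
  · obtain ⟨j, hjt, hij⟩ := hcase
    have hijl := Finset.mem_inter.mp hij
    have hne1 : j ≠ t - 1 := fun h => hnot1 (h ▸ hijl.1)
    have hne2 : j + 1 ≠ t - 1 := fun h => hnot1 (h ▸ hijl.2)
    have hj2 : j + 1 + 2 ≤ t := by omega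
    refine hnc (cycle_of_segment R p (j+1) t i hj2
      (fun x h1 h2 => hm x h2)
      (fun x y h1 h2 h3 h4 h => hi x y h2 h4 h)
      (fun x h1 h2 => hadj x h2)
      (fun x y h1 h2 h3 h4 h => hlab x y h2 h4 h)
      hijl.2 hit ?_)
    intro x hx1 hx2 hix
    have e1 : lsupp (p x) ∩ lsupp (p (x+1)) = {i} := lsupp_singleton (hedge_card x hx2) hix
    have e2 : lsupp (p j) ∩ lsupp (p (j+1)) = {i} := lsupp_singleton (hedge_card j hjt) hij
    have := hlab x j hx2 hjt (e1.trans e2.symm)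
    omega
  · push_neg at hcase
    by_cases hon : ∃ s, s ≤ t ∧ p s = r'
    · obtain ⟨s, hst, hps⟩ := hon
      have hs1 : s ≠ t := fun h => hr'ne (h ▸ hps.symm)
      have hs2 : s ≠ t - 1 := fun h => hnot1 (by rw [← h, hps]; exact hir')
      refine hnc (cycle_of_segment R p s t i (by omega)
        (fun x h1 h2 => hm x h2)
        (fun x y h1 h2 h3 h4 h => hi x y h2 h4 h)
        (fun x h1 h2 => hadj x h2)
        (fun x y h1 h2 h3 h4 h => hlab x y h2 h4 h)
        (by rw [hps]; exact hir') hit (fun x _ hx2 => hcase x hx2))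
    · push_neg at hon
      set p' : ℕ → (Fin n → K) := fun x => if x ≤ t then p x else r' with hp'
      have hpeq : ∀ x, x ≤ t → p' x = p x := fun x hx => if_pos hx
      have hp't : p' (t+1) = r' := if_neg (by omega)
      have hPt1 : P (t+1) := by
        refine ⟨p', ?_, ?_, ?_, ?_⟩
        · intro x hx
          rcases Nat.lt_or_ge x (t+1) with h | h
          · rw [hpeq x (by omega)]; exact hm x (by omega)
          · rw [show x = t+1 by omega, hp't]; exact hr'R
        · intro x y hx hy h
          rcases Nat.lt_or_ge x (t+1) with h1 | h1 <;> rcases Nat.lt_or_ge y (t+1) with h2 | h2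
          · rw [hpeq x (by omega), hpeq y (by omega)] at h
            exact hi x y (by omega) (by omega) h
          · rw [hpeq x (by omega), show y = t+1 by omega, hp't] at h
            exact absurd h (hon x (by omega))
          · rw [hpeq y (by omega), show x = t+1 by omega, hp't] at h
            exact absurd h.symm (hon y (by omega))
          · omega
        · intro x hx
          rcases Nat.lt_or_ge x t with h1 | h1
          · rw [hpeq x (by omega), hpeq (x+1) (by omega)]
            exact hadj x h1
          · rw [show x = t by omega, hpeq t le_rfl, hp't]
            exact ⟨i, Finset.mem_inter.mpr ⟨hit, hir'⟩⟩
        · intro x y hx hy h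
          rcases Nat.lt_or_ge x t with h1 | h1 <;> rcases Nat.lt_or_ge y t with h2 | h2
          · rw [hpeq x (by omega), hpeq (x+1) (by omega), hpeq y (by omega),
              hpeq (y+1) (by omega)] at h
            exact hlab x y h1 h2 h
          · rw [hpeq x (by omega), hpeq (x+1) (by omega), show y = t by omega,
              hpeq t le_rfl, hp't] at h
            exact absurd (h ▸ Finset.mem_inter.mpr ⟨hit, hir'⟩) (hcase x h1)
          · rw [hpeq y (by omega), hpeq (y+1) (by omega), show x = t by omega,
              hpeq t le_rfl, hp't] at h
            exact absurd (h ▸ Finset.mem_inter.mpr ⟨hit, hir'⟩) (hcase y h2)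
          · omega
      have := hmax (t+1) hPt1
      omega

lemma forward_dir (R : Finset (Fin n → K))
    (hpair : ∀ r ∈ R, ∀ r' ∈ R, r ≠ r' → (lsupp r ∩ lsupp r').card ≤ 1)
    (hs : SimpleRelSet R) : ¬ HasProperCycle R := by
  obtain ⟨m, e, einj, erange, econd⟩ := hs
  rintro ⟨k, v, vinj, vmem, vadj, vlab⟩
  have hex : ∀ i, ∃ j, e j = v i := by
    intro i
    have : v i ∈ Set.range e := by rw [erange]; exact_mod_cast vmem i
    exact this
  choose σ hσ using hex
  have σinj : Function.Injective σ := fun i j h => vinj (by rw [← hσ i, ← hσ j, h])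
  obtain ⟨i0, hmaxi⟩ := Finite.exists_max σ
  set a := i0 - 1 with ha
  have ha1 : a + 1 = i0 := sub_add_cancel i0 1
  have h1ne : (1 : Fin (k+3)) ≠ 0 := by
    intro h
    have := congrArg Fin.val h
    simp at this
  have h2ne : (1 : Fin (k+3)) + 1 ≠ 0 := by
    intro h
    have := congrArg Fin.val h
    simp [Fin.val_add] at this
    rw [Nat.mod_eq_of_lt (by omega)] at this
    exact absurd this (by omega)
  have hane : a ≠ i0 := fun h => h1ne (sub_eq_self.mp h)
  have hbne : i0 + 1 ≠ i0 := fun h => h1ne (add_eq_left.mp h)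
  have habne : a ≠ i0 + 1 := by
    intro h
    have h' : a + 1 = i0 + 1 + 1 := by rw [h]
    rw [ha1] at h'
    have h'' : i0 + (1 + 1) = i0 := by rw [← add_assoc]; exact h'.symm
    exact h2ne (add_eq_left.mp h'')
  -- labels
  have hLa : (lsupp (v a) ∩ lsupp (v (a + 1))).Nonempty := vadj a
  have hLi : (lsupp (v i0) ∩ lsupp (v (i0 + 1))).Nonempty := vadj i0
  obtain ⟨x, hx⟩ := hLa
  obtain ⟨y, hy⟩ := hLi
  rw [ha1] at hx
  have hva : v a ≠ v i0 := fun h => hane (vinj h)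
  have hvb : v (i0 + 1) ≠ v i0 := fun h => hbne (vinj h)
  have hcard1 : (lsupp (v a) ∩ lsupp (v i0)).card ≤ 1 :=
    hpair _ (vmem a) _ (vmem i0) hva
  have hcard2 : (lsupp (v i0) ∩ lsupp (v (i0+1))).card ≤ 1 :=
    hpair _ (vmem i0) _ (vmem (i0+1)) (fun h => hbne (vinj h.symm))
  have hxy : x ≠ y := by
    intro h
    subst h
    have e1 : lsupp (v a) ∩ lsupp (v i0) = {x} := lsupp_singleton hcard1 hx
    have e2 : lsupp (v i0) ∩ lsupp (v (i0+1)) = {x} := lsupp_singleton hcard2 hy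
    refine hane (vlab ?_)
    show lsupp (v a) ∩ lsupp (v (a+1)) = lsupp (v i0) ∩ lsupp (v (i0+1))
    rw [ha1, e1, e2]
  -- both x and y lie in the bad set
  have hmax' : ∀ i, i ≠ i0 → σ i < σ i0 := fun i h =>
    lt_of_le_of_ne (hmaxi i) (fun h' => h (σinj h'))
  set T := lsupp (e (σ i0)) ∩ (Finset.Iio (σ i0)).biUnion (fun j => lsupp (e j)) with hT
  have hxT : x ∈ T := by
    rw [hT]
    refine Finset.mem_inter.mpr ⟨by rw [hσ i0]; exact (Finset.mem_inter.mp hx).2, ?_⟩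
    refine Finset.mem_biUnion.mpr ⟨σ a, Finset.mem_Iio.mpr (hmax' a hane), ?_⟩
    rw [hσ a]; exact (Finset.mem_inter.mp hx).1
  have hyT : y ∈ T := by
    rw [hT]
    refine Finset.mem_inter.mpr ⟨by rw [hσ i0]; exact (Finset.mem_inter.mp hy).1, ?_⟩
    refine Finset.mem_biUnion.mpr ⟨σ (i0+1), Finset.mem_Iio.mpr (hmax' _ hbne), ?_⟩
    rw [hσ (i0+1)]; exact (Finset.mem_inter.mp hy).2
  have hT2 : 1 < T.card := Finset.one_lt_card.mpr ⟨x, hxT, y, hyT, hxy⟩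
  have hT1 := econd (σ i0)
  rw [← hT] at hT1
  omega

open Classical in
lemma extend_simple (R : Finset (Fin n → K)) (r : Fin n → K) (hr : r ∈ R)
    (hcard : (lsupp r ∩ (R.erase r).biUnion (fun s => lsupp s)).card ≤ 1)
    (hs : SimpleRelSet (R.erase r)) : SimpleRelSet R := by
  classical
  obtain ⟨m, e, einj, erange, econd⟩ := hs
  have hrnot : r ∉ Set.range e := by
    rw [erange]
    simp
  set e' : Fin (m+1) → (Fin n → K) :=
    fun i => if h : (i : ℕ) < m then e ⟨i, h⟩ else r with he'
  have he'lt : ∀ (i : Fin (m+1)) (h : (i : ℕ) < m), e' i = e ⟨i, h⟩ := by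
    intro i h; simp only [he', dif_pos h]
  have he'last : ∀ (i : Fin (m+1)), ¬ ((i : ℕ) < m) → e' i = r := by
    intro i h; simp only [he', dif_neg h]
  have hmem : ∀ (i : Fin (m+1)) (h : (i : ℕ) < m), e ⟨i, h⟩ ∈ R.erase r := by
    intro i h
    have : e ⟨i, h⟩ ∈ Set.range e := Set.mem_range_self _
    rw [erange] at this
    exact_mod_cast this
  refine ⟨m+1, e', ?_, ?_, ?_⟩
  · intro i j h
    by_cases hi : (i : ℕ) < m <;> by_cases hj : (j : ℕ) < m
    · rw [he'lt i hi, he'lt j hj] at h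
      have := congrArg Fin.val (einj h)
      exact Fin.ext (by simpa using this)
    · rw [he'lt i hi, he'last j hj] at h
      exact absurd ⟨_, h⟩ hrnot
    · rw [he'last i hi, he'lt j hj] at h
      exact absurd ⟨_, h.symm⟩ hrnot
    · have hi' := i.is_lt; have hj' := j.is_lt
      exact Fin.ext (by omega)
  · ext x
    simp only [Set.mem_range, Finset.mem_coe]
    constructor
    · rintro ⟨i, rfl⟩
      by_cases hi : (i : ℕ) < m
      · rw [he'lt i hi]
        exact Finset.mem_of_mem_erase (hmem i hi)
      · rw [he'last i hi]; exact hr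
    · intro hx
      rcases eq_or_ne x r with rfl | hxr
      · exact ⟨Fin.last m, he'last (Fin.last m) (by simp)⟩
      · have hx' : x ∈ Set.range e := by
          rw [erange]
          simp [Finset.mem_erase, hxr, hx]
        obtain ⟨j, rfl⟩ := hx'
        refine ⟨⟨j.val, by omega⟩, ?_⟩
        rw [he'lt _ (by simpa using j.is_lt)]
  · intro i
    by_cases hi : (i : ℕ) < m
    · have hbi : (Finset.Iio i).biUnion (fun j => lsupp (e' j)) =
          (Finset.Iio (⟨i, hi⟩ : Fin m)).biUnion (fun j => lsupp (e j)) := by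
        ext x
        simp only [Finset.mem_biUnion, Finset.mem_Iio]
        constructor
        · rintro ⟨j, hj, hxj⟩
          have hjm : (j : ℕ) < m := by
            have := Fin.lt_def.mp hj; omega
          refine ⟨⟨j, hjm⟩, Fin.lt_def.mpr (by simpa using Fin.lt_def.mp hj), ?_⟩
          rwa [he'lt j hjm] at hxj
        · rintro ⟨j, hj, hxj⟩
          refine ⟨⟨j.val, by omega⟩, Fin.lt_def.mpr (by simpa using Fin.lt_def.mp hj), ?_⟩
          rw [he'lt _ (by simpa using j.is_lt)]
          simpa using hxj
      rw [he'lt i hi, hbi]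
      exact econd ⟨i, hi⟩
    · rw [he'last i hi]
      refine le_trans (Finset.card_le_card ?_) hcard
      intro x hx
      obtain ⟨hx1, hx2⟩ := Finset.mem_inter.mp hx
      obtain ⟨j, hj, hxj⟩ := Finset.mem_biUnion.mp hx2
      have hjm : (j : ℕ) < m := by
        have := Fin.lt_def.mp (Finset.mem_Iio.mp hj)
        have := i.is_lt
        omega
      rw [he'lt j hjm] at hxj
      exact Finset.mem_inter.mpr ⟨hx1, Finset.mem_biUnion.mpr ⟨e ⟨j, hjm⟩, hmem j hjm, hxj⟩⟩

open Classical in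
lemma backward_dir : ∀ (R : Finset (Fin n → K)),
    (∀ r ∈ R, ∀ r' ∈ R, r ≠ r' → (lsupp r ∩ lsupp r').card ≤ 1) →
    ¬ HasProperCycle R → SimpleRelSet R := by
  intro R
  induction R using Finset.strongInduction with
  | _ R ih =>
    intro hpair hnc
    rcases R.eq_empty_or_nonempty with rfl | hne
    · refine ⟨0, Fin.elim0, fun i => i.elim0, ?_, fun i => i.elim0⟩
      simp
    · obtain ⟨r, hr, hcard⟩ := exists_terminal R hpair hnc hne
      have hsub : R.erase r ⊂ R := Finset.erase_ssubset hr
      have hpair' : ∀ s ∈ R.erase r, ∀ s' ∈ R.erase r, s ≠ s' →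
          (lsupp s ∩ lsupp s').card ≤ 1 := fun s hs s' hs' h =>
        hpair s (Finset.mem_of_mem_erase hs) s' (Finset.mem_of_mem_erase hs') h
      have hnc' : ¬ HasProperCycle (R.erase r) := by
        intro ⟨k, v, h1, h2, h3, h4⟩
        exact hnc ⟨k, v, h1, fun i => Finset.mem_of_mem_erase (h2 i), h3, h4⟩
      exact extend_simple R r hr hcard (ih _ hsub hpair' hnc')

/-- Lemma 4.6: let `ℜ` be a finite subset of `F(𝒜)` with `|supp(r) ∩ supp(r')| ≤ 1` for
all distinct `r, r' ∈ ℜ`.  Then `ℜ` is simple if and only if the intersection graph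
`𝒢(ℜ)` is quasi-acyclic (contains no proper cycle). -/
theorem simple_iff_quasi_acyclic
    {V : Type*} [AddCommGroup V] [Module K V] [FiniteDimensional K V]
    (α : Fin n → Module.Dual K V) (hne : ∀ i, α i ≠ 0)
    (hdist : ∀ i j, i ≠ j → LinearMap.ker (α i) ≠ LinearMap.ker (α j))
    (R : Finset (Fin n → K)) (hR : ∀ r ∈ R, IsRel α r)
    (hpair : ∀ r ∈ R, ∀ r' ∈ R, r ≠ r' → (lsupp r ∩ lsupp r').card ≤ 1) :
    SimpleRelSet R ↔ ¬ HasProperCycle R := by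
  constructor
  · exact fun hs => forward_dir R hpair hs
  · exact fun h => backward_dir R hpair h


end
end
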